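/- arXiv:2405.08358 — 4 statements merged into one kernel-verified Lean document; each statement's English description precedes it below -/
import Mathlib

section
/- Let p ∈ (1, ∞) and f ∈ L^p(∂T, ν). Then lim_{j → −∞} ∫_{∂T} |𝒫f(ω(j)) − f(ω)|^p dν(ω) = 0. -/
open MeasureTheory
open scoped ENNReal NNReal

/-- The punctured boundary `∂T` of the tree: maps `ω : ℤ → T` with `lev (ω j) = j`
and `par (ω j) = ω (j+1)`. -/
def PBoundary {T : Type*} (par : T → T) (lev : T → ℤ) : Type _ :=
  {ω : ℤ → T // (∀ j : ℤ, lev (ω j) = j) ∧ ∀ j : ℤ, par (ω j) = ω (j + 1)}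

/-- The boundary sector `∂T_x`. -/
def sector {T : Type*} (par : T → T) (lev : T → ℤ) (x : T) : Set (PBoundary par lev) :=
  {ω : PBoundary par lev | ω.1 (lev x) = x}

/-- The σ-algebra on `∂T` generated by the sectors. -/
instance {T : Type*} (par : T → T) (lev : T → ℤ) : MeasurableSpace (PBoundary par lev) :=
  MeasurableSpace.generateFrom (Set.range (sector par lev))

/-- The flow measure `m_ν x = ν (∂T_x)` (as a real number). -/
noncomputable def mnu {T : Type*} (par : T → T) (lev : T → ℤ)
    (ν : Measure (PBoundary par lev)) (x : T) : ℝ :=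
  (ν (sector par lev x)).toReal

/-- The Poisson integral operator `𝒫 g (x) = m_ν(x)⁻¹ ∫_{∂T_x} g dν`. -/
noncomputable def poisson {T : Type*} (par : T → T) (lev : T → ℤ)
    (ν : Measure (PBoundary par lev)) (g : PBoundary par lev → ℝ) (x : T) : ℝ :=
  (mnu par lev ν x)⁻¹ * ∫ ω in sector par lev x, g ω ∂ν

namespace Stmt9Aux

variable {T : Type*} {par : T → T} {lev : T → ℤ}

lemma pb_lev (ω : PBoundary par lev) (j : ℤ) : lev (ω.1 j) = j := ω.2.1 j

lemma pb_iter (ω : PBoundary par lev) (j : ℤ) (n : ℕ) : ω.1 (j + n) = par^[n] (ω.1 j) := by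
  induction n with
  | zero => simp
  | succ n ih =>
    rw [Function.iterate_succ_apply', ← ih, ω.2.2 (j + n)]
    have : j + ((n+1 : ℕ) : ℤ) = (j + n) + 1 := by push_cast; ring
    rw [this]

lemma pb_eq_of_agree {ω ω' : PBoundary par lev} {j J : ℤ} (hj : j ≤ J)
    (h : ω.1 j = ω'.1 j) : ω.1 J = ω'.1 J := by
  have hJ : J = j + ((J - j).toNat : ℤ) := by omega
  rw [hJ, pb_iter, pb_iter, h]

lemma mem_sector {x : T} {ω : PBoundary par lev} :
    ω ∈ sector par lev x ↔ ω.1 (lev x) = x := Iff.rfl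

lemma self_mem_sector (ω : PBoundary par lev) (j : ℤ) : ω ∈ sector par lev (ω.1 j) := by
  rw [mem_sector]
  rw [pb_lev ω j]

lemma measurableSet_sector (x : T) : MeasurableSet (sector par lev x) :=
  MeasurableSpace.measurableSet_generateFrom ⟨x, rfl⟩

lemma sector_subset {x z : T} (h : lev x ≤ lev z)
    (hit : par^[(lev z - lev x).toNat] x = z) :
    sector par lev x ⊆ sector par lev z := by
  intro ω hω
  rw [mem_sector] at hω ⊢
  have hz : lev z = lev x + ((lev z - lev x).toNat : ℤ) := by omega
  rw [hz, pb_iter, hω, hit]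

lemma sector_disjoint_of_ne_iter {x z : T} (h : lev x ≤ lev z)
    (hit : par^[(lev z - lev x).toNat] x ≠ z) :
    Disjoint (sector par lev x) (sector par lev z) := by
  rw [Set.disjoint_left]
  intro ω h1 h2
  rw [mem_sector] at h1 h2
  apply hit
  have hz : lev z = lev x + ((lev z - lev x).toNat : ℤ) := by omega
  calc par^[(lev z - lev x).toNat] x = par^[(lev z - lev x).toNat] (ω.1 (lev x)) := by rw [h1]
    _ = ω.1 (lev x + ((lev z - lev x).toNat : ℤ)) := (pb_iter ω (lev x) _).symm
    _ = z := by rw [← hz, h2]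

lemma sector_inter_cases {x z : T} (h : lev x ≤ lev z) :
    sector par lev x ∩ sector par lev z = sector par lev x ∨
      sector par lev x ∩ sector par lev z = ∅ := by
  by_cases hit : par^[(lev z - lev x).toNat] x = z
  · exact Or.inl (Set.inter_eq_left.2 (sector_subset h hit))
  · exact Or.inr (Set.disjoint_iff_inter_eq_empty.1 (sector_disjoint_of_ne_iter h hit))

lemma sector_disjoint_of_level {x z : T} (hl : lev x = lev z) (hxz : x ≠ z) :
    Disjoint (sector par lev x) (sector par lev z) := by
  rw [Set.disjoint_left]
  intro ω h1 h2
  rw [mem_sector] at h1 h2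
  exact hxz (h1.symm.trans (by rw [hl, h2]))

lemma desc_finite (hfin : ∀ x : T, {y : T | par y = x}.Finite) (n : ℕ) (x : T) :
    {y : T | par^[n] y = x}.Finite := by
  induction n generalizing x with
  | zero => simp only [Function.iterate_zero, id_eq, Set.setOf_eq_eq_singleton]; exact Set.finite_singleton x
  | succ n ih =>
    have hsub : {y : T | par^[n+1] y = x} ⊆ ⋃ z ∈ {z : T | par z = x}, {y : T | par^[n] y = z} := by
      intro y hy
      simp only [Set.mem_setOf_eq, Function.iterate_succ_apply'] at hy
      exact Set.mem_biUnion hy rfl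
    exact ((hfin x).biUnion (fun z _ => ih z)).subset hsub

lemma countable_T (hfin : ∀ x : T, {y : T | par y = x}.Finite)
    (hconn : ∀ x y : T, ∃ n m : ℕ, par^[n] x = par^[m] y)
    (ω₀ : PBoundary par lev) : Countable T := by
  rw [← Set.countable_univ_iff]
  have hsub : (Set.univ : Set T) ⊆ ⋃ (j : ℤ), ⋃ (n : ℕ), {y : T | par^[n] y = ω₀.1 j} := by
    intro x _
    obtain ⟨n, m, h⟩ := hconn x (ω₀.1 (lev x))
    have h2 : par^[m] (ω₀.1 (lev x)) = ω₀.1 (lev x + m) := (pb_iter ω₀ (lev x) m).symm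
    exact Set.mem_iUnion.2 ⟨lev x + m, Set.mem_iUnion.2 ⟨n, h.trans h2⟩⟩
  exact ((Set.countable_iUnion fun j => Set.countable_iUnion fun n =>
    (desc_finite hfin n _).countable).mono hsub)


/-- elementary set -/
def elemSet (par : T → T) (lev : T → ℤ) (j : ℤ) (t : Finset T) : Set (PBoundary par lev) :=
  {ω | ω.1 j ∈ t}

lemma mem_elemSet {j : ℤ} {t : Finset T} {ω : PBoundary par lev} :
    ω ∈ elemSet par lev j t ↔ ω.1 j ∈ t := Iff.rfl

lemma sector_eq_elemSet (x : T) : sector par lev x = elemSet par lev (lev x) {x} := by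
  ext ω; simp [mem_sector, mem_elemSet]

lemma elemSet_eq_biUnion [DecidableEq T] (j : ℤ) (t : Finset T) :
    elemSet par lev j t = ⋃ y ∈ t.filter (fun y => lev y = j), sector par lev y := by
  ext ω
  simp only [mem_elemSet, Set.mem_iUnion, Finset.mem_filter, mem_sector, exists_prop]
  constructor
  · intro h
    exact ⟨ω.1 j, ⟨h, pb_lev ω j⟩, by rw [pb_lev ω j]⟩
  · rintro ⟨y, ⟨ht, hl⟩, hy⟩
    rw [hl] at hy
    rwa [hy]

lemma measurableSet_elemSet (j : ℤ) (t : Finset T) :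
    MeasurableSet (elemSet par lev j t) := by
  classical
  rw [elemSet_eq_biUnion]
  exact Set.Finite.measurableSet_biUnion (Finset.finite_toSet _)
    (fun y _ => measurableSet_sector y)

lemma elemSet_measure_lt_top {ν : Measure (PBoundary par lev)}
    (hν : ∀ x : T, 0 < ν (sector par lev x) ∧ ν (sector par lev x) < ⊤)
    (j : ℤ) (t : Finset T) : ν (elemSet par lev j t) < ⊤ := by
  classical
  rw [elemSet_eq_biUnion]
  refine lt_of_le_of_lt (measure_biUnion_finset_le _ _) ?_
  exact ENNReal.sum_lt_top.2 fun y _ => (hν y).2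

lemma elemSet_refine (hfin : ∀ x : T, {y : T | par y = x}.Finite)
    (j : ℤ) (t : Finset T) {j' : ℤ} (hj' : j' ≤ j) :
    ∃ t' : Finset T, elemSet par lev j t = elemSet par lev j' t' := by
  set n := (j - j').toNat with hn
  have hfs : {y : T | par^[n] y ∈ t}.Finite := by
    have : {y : T | par^[n] y ∈ t} ⊆ ⋃ x ∈ (t : Set T), {y : T | par^[n] y = x} := by
      intro y hy; exact Set.mem_biUnion hy rfl
    exact ((t.finite_toSet.biUnion (fun x _ => desc_finite hfin n x)).subset this)
  refine ⟨hfs.toFinset, ?_⟩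
  ext ω
  simp only [mem_elemSet, Set.Finite.mem_toFinset, Set.mem_setOf_eq]
  have h1 : ω.1 j = par^[n] (ω.1 j') := by
    have : j = j' + (n : ℤ) := by omega
    rw [this, pb_iter]
  rw [h1]

lemma elemSet_union (hfin : ∀ x : T, {y : T | par y = x}.Finite)
    (j₁ j₂ : ℤ) (t₁ t₂ : Finset T) :
    ∃ (j : ℤ) (t : Finset T),
      elemSet par lev j₁ t₁ ∪ elemSet par lev j₂ t₂ = elemSet par lev j t := by
  classical
  obtain ⟨t₁', h₁⟩ := elemSet_refine hfin j₁ t₁ (min_le_left j₁ j₂)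
  obtain ⟨t₂', h₂⟩ := elemSet_refine hfin j₂ t₂ (min_le_right j₁ j₂)
  refine ⟨min j₁ j₂, t₁' ∪ t₂', ?_⟩
  rw [h₁, h₂]
  ext ω
  simp [mem_elemSet]

lemma elemSet_biUnion (hfin : ∀ x : T, {y : T | par y = x}.Finite)
    (N : ℕ) (E : ℕ → Set (PBoundary par lev))
    (hE : ∀ i, ∃ (j : ℤ) (t : Finset T), E i = elemSet par lev j t) :
    ∃ (j : ℤ) (t : Finset T), (⋃ i < N, E i) = elemSet par lev j t := by
  induction N with
  | zero => exact ⟨0, ∅, by simp [elemSet]⟩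
  | succ N ih =>
    obtain ⟨j, t, hjt⟩ := ih
    obtain ⟨j', t', hjt'⟩ := hE N
    obtain ⟨j'', t'', h⟩ := elemSet_union hfin j j' t t'
    refine ⟨j'', t'', ?_⟩
    rw [Set.biUnion_lt_succ, hjt, hjt', h]


lemma isPiSystem_sectors : IsPiSystem (Set.range (sector par lev)) := by
  rintro _ ⟨x, rfl⟩ _ ⟨z, rfl⟩ hne
  rcases le_total (lev x) (lev z) with h | h
  · rcases sector_inter_cases (par := par) h with hc | hc
    · rw [hc]; exact ⟨x, rfl⟩
    · exact absurd hc (Set.nonempty_iff_ne_empty.1 hne)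
  · rcases sector_inter_cases (par := par) h with hc | hc
    · rw [Set.inter_comm, hc]; exact ⟨z, rfl⟩
    · rw [Set.inter_comm]
      exact absurd hc (Set.nonempty_iff_ne_empty.1 (by rwa [Set.inter_comm] at hne))

lemma approx_in_sector (hfin : ∀ x : T, {y : T | par y = x}.Finite)
    {ν : Measure (PBoundary par lev)}
    (hν : ∀ x : T, 0 < ν (sector par lev x) ∧ ν (sector par lev x) < ⊤)
    (ω₀ : PBoundary par lev) {A : Set (PBoundary par lev)} (hA : MeasurableSet A) :
    ∀ (K : ℤ) (ε : ℝ≥0∞), ε ≠ 0 → ∃ (j : ℤ) (t : Finset T),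
      ν (symmDiff (A ∩ sector par lev (ω₀.1 K)) (elemSet par lev j t)) ≤ ε := by
  classical
  refine MeasurableSpace.induction_on_inter (C := fun A _ =>
      ∀ (K : ℤ) (ε : ℝ≥0∞), ε ≠ 0 → ∃ (j : ℤ) (t : Finset T),
        ν (symmDiff (A ∩ sector par lev (ω₀.1 K)) (elemSet par lev j t)) ≤ ε)
    rfl isPiSystem_sectors ?_ ?_ ?_ ?_ _ hA
  · -- empty
    intro K ε hε
    refine ⟨K, ∅, ?_⟩
    simp [elemSet, symmDiff_def]
  · -- sectors
    rintro _ ⟨x, rfl⟩ K ε hε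
    have hlevK : lev (ω₀.1 K) = K := pb_lev ω₀ K
    have hexact : ∃ (j : ℤ) (t : Finset T),
        sector par lev x ∩ sector par lev (ω₀.1 K) = elemSet par lev j t := by
      rcases le_total (lev x) (lev (ω₀.1 K)) with h | h
      · rcases sector_inter_cases (par := par) h with hc | hc
        · exact ⟨lev x, {x}, by rw [hc, sector_eq_elemSet]⟩
        · exact ⟨K, ∅, by rw [hc]; simp [elemSet]⟩
      · rcases sector_inter_cases (par := par) h with hc | hc
        · refine ⟨K, {ω₀.1 K}, ?_⟩
          rw [Set.inter_comm, hc, sector_eq_elemSet, hlevK]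
        · exact ⟨K, ∅, by rw [Set.inter_comm, hc]; simp [elemSet]⟩
    obtain ⟨j, t, hjt⟩ := hexact
    refine ⟨j, t, ?_⟩
    rw [hjt]
    simp
  · -- complement
    intro A hAmeas hC K ε hε
    obtain ⟨j, t, hjt⟩ := hC K ε hε
    obtain ⟨t₂, ht₂⟩ := elemSet_refine (par := par) (lev := lev) hfin j t (min_le_left j K)
    obtain ⟨t₁, ht₁⟩ := elemSet_refine (par := par) (lev := lev) hfin K {ω₀.1 K}
      (min_le_right j K)
    have hBK : sector par lev (ω₀.1 K) = elemSet par lev K {ω₀.1 K} := by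
      rw [sector_eq_elemSet, pb_lev ω₀ K]
    refine ⟨min j K, t₁ \ t₂, le_trans (measure_mono ?_) hjt⟩
    intro ω hω
    have key : ω ∈ elemSet par lev (min j K) (t₁ \ t₂) ↔
        (ω ∈ sector par lev (ω₀.1 K) ∧ ω ∉ elemSet par lev j t) := by
      rw [hBK, ht₁, ht₂]
      simp [mem_elemSet, Finset.mem_sdiff]
    rw [Set.mem_symmDiff] at hω ⊢
    by_cases h1 : ω ∈ A <;> by_cases h2 : ω ∈ sector par lev (ω₀.1 K) <;>
      by_cases h3 : ω ∈ elemSet par lev j t <;>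
      simp_all [Set.mem_inter_iff, Set.mem_compl_iff]
  · -- countable disjoint union
    intro g hdisj hmeas hC K ε hε
    by_cases hεt : ε = ⊤
    · exact ⟨K, ∅, by rw [hεt]; exact le_top⟩
    have hhalf : ε / 2 ≠ 0 := by
      simp [ENNReal.div_eq_zero_iff, hε]
    set B := sector par lev (ω₀.1 K) with hB
    have hBfin : ν B < ⊤ := (hν _).2
    set a : ℕ → ℝ≥0∞ := fun i => ν (g i ∩ B) with ha
    have hdisj' : Pairwise (Function.onFun Disjoint fun i => g i ∩ B) :=
      hdisj.mono fun i j h => h.mono Set.inter_subset_left Set.inter_subset_left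
    have hmeas' : ∀ i, MeasurableSet (g i ∩ B) :=
      fun i => (hmeas i).inter (measurableSet_sector _)
    have hsum : ∑' i, a i = ν ((⋃ i, g i) ∩ B) := by
      rw [Set.iUnion_inter]
      exact (measure_iUnion hdisj' hmeas').symm
    have hfin' : ∑' i, a i ≠ ⊤ := by
      rw [hsum]
      exact (lt_of_le_of_lt (measure_mono Set.inter_subset_right) hBfin).ne
    obtain ⟨N, hN⟩ : ∃ N, ∑' i, a (i + N) ≤ ε / 2 := by
      have htd := ENNReal.tendsto_sum_nat_add a hfin'
      have : ∀ᶠ N in Filter.atTop, ∑' i, a (i + N) < ε / 2 :=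
        htd.eventually_lt_const (by simpa [pos_iff_ne_zero] using hhalf)
      exact ⟨this.exists.choose, this.exists.choose_spec.le⟩
    have htail : ν ((⋃ i, g (i + N) ∩ B)) ≤ ε / 2 := by
      refine le_trans (measure_iUnion_le _) hN
    set δ := ε / 2 / N with hδdef
    rcases Nat.eq_zero_or_pos N with hN0 | hN0
    · refine ⟨K, ∅, ?_⟩
      have : symmDiff ((⋃ i, g i) ∩ B) (elemSet par lev K (∅ : Finset T)) =
          (⋃ i, g i) ∩ B := by simp [elemSet, symmDiff_def]
      rw [this, ← hsum]
      calc ∑' i, a i = ∑' i, a (i + N) := by rw [hN0]; simp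
        _ ≤ ε / 2 := hN
        _ ≤ ε := ENNReal.half_le_self
    have hδ : δ ≠ 0 := by
      rw [hδdef]
      intro h
      rcases ENNReal.div_eq_zero_iff.1 h with h1 | h1
      · exact hhalf h1
      · exact (ENNReal.natCast_ne_top N) h1
    choose jf tf hjt using fun i => hC i K δ hδ
    obtain ⟨j, t, hU⟩ := elemSet_biUnion hfin N
      (fun i => elemSet par lev (jf i) (tf i)) (fun i => ⟨jf i, tf i, rfl⟩)
    refine ⟨j, t, ?_⟩
    rw [← hU]
    have hincl : symmDiff ((⋃ i, g i) ∩ B) (⋃ i < N, elemSet par lev (jf i) (tf i)) ⊆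
        (⋃ i < N, symmDiff (g i ∩ B) (elemSet par lev (jf i) (tf i))) ∪
          (⋃ i, g (i + N) ∩ B) := by
      intro ω hω
      rw [Set.mem_symmDiff] at hω
      rcases hω with ⟨h1, h2⟩ | ⟨h1, h2⟩
      · rw [Set.mem_inter_iff, Set.mem_iUnion] at h1
        obtain ⟨⟨i, hi⟩, hωB⟩ := h1
        rcases lt_or_ge i N with hiN | hiN
        · refine Set.mem_union_left _ ?_
          refine Set.mem_biUnion hiN ?_
          rw [Set.mem_symmDiff]
          refine Or.inl ⟨⟨hi, hωB⟩, fun hc => h2 (Set.mem_biUnion hiN hc)⟩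
        · refine Set.mem_union_right _ ?_
          exact Set.mem_iUnion.2 ⟨i - N, by rw [Nat.sub_add_cancel hiN]; exact ⟨hi, hωB⟩⟩
      · rw [Set.mem_iUnion] at h1
        obtain ⟨i, hi⟩ := h1
        rw [Set.mem_iUnion] at hi
        obtain ⟨hiN, hie⟩ := hi
        refine Set.mem_union_left _ (Set.mem_biUnion hiN ?_)
        rw [Set.mem_symmDiff]
        exact Or.inr ⟨hie, fun hc => h2 ⟨Set.mem_iUnion.2 ⟨i, hc.1⟩, hc.2⟩⟩
    refine le_trans (measure_mono hincl) (le_trans (measure_union_le _ _) ?_)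
    have hb1 : ν (⋃ i < N, symmDiff (g i ∩ B) (elemSet par lev (jf i) (tf i))) ≤ ε / 2 := by
      have hrw : (⋃ i < N, symmDiff (g i ∩ B) (elemSet par lev (jf i) (tf i))) =
          ⋃ i ∈ Finset.range N, symmDiff (g i ∩ B) (elemSet par lev (jf i) (tf i)) := by
        ext ω; simp [Finset.mem_range]
      rw [hrw]
      refine le_trans (measure_biUnion_finset_le _ _) ?_
      calc ∑ i ∈ Finset.range N, ν (symmDiff (g i ∩ B) (elemSet par lev (jf i) (tf i)))
          ≤ ∑ _i ∈ Finset.range N, δ := Finset.sum_le_sum (fun i _ => hjt i)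
        _ = N * δ := by rw [Finset.sum_const, Finset.card_range, nsmul_eq_mul]
        _ ≤ ε / 2 := by rw [hδdef]; exact ENNReal.mul_div_le
    calc ν (⋃ i < N, symmDiff (g i ∩ B) (elemSet par lev (jf i) (tf i))) +
          ν (⋃ i, g (i + N) ∩ B) ≤ ε / 2 + ε / 2 := add_le_add hb1 htail
      _ = ε := ENNReal.add_halves ε


lemma measurable_eval [Countable T] (j : ℤ) :
    @Measurable (PBoundary par lev) T _ ⊤ (fun ω => ω.1 j) := by
  intro B _
  have hrw : (fun ω : PBoundary par lev => ω.1 j) ⁻¹' B =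
      ⋃ x ∈ {x ∈ B | lev x = j}, sector par lev x := by
    ext ω
    simp only [Set.mem_preimage, Set.mem_setOf_eq, Set.mem_iUnion, exists_prop, mem_sector]
    constructor
    · intro h
      exact ⟨ω.1 j, ⟨h, pb_lev ω j⟩, by rw [pb_lev ω j]⟩
    · rintro ⟨x, ⟨hB, hl⟩, hx⟩
      rw [hl] at hx
      rwa [hx]
  rw [hrw]
  exact MeasurableSet.biUnion (Set.to_countable _) fun x _ => measurableSet_sector x

lemma measurable_comp_eval [Countable T] (j : ℤ) {β : Type*} [MeasurableSpace β] (F : T → β) :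
    Measurable (fun ω : PBoundary par lev => F (ω.1 j)) :=
  Measurable.comp (measurable_from_top (f := F)) (measurable_eval j)

variable {ν : Measure (PBoundary par lev)}

lemma poisson_const
    (hν : ∀ x : T, 0 < ν (sector par lev x) ∧ ν (sector par lev x) < ⊤)
    {g : PBoundary par lev → ℝ} {c : ℝ} {y : T}
    (hg : ∀ ω ∈ sector par lev y, g ω = c) :
    poisson par lev ν g y = c := by
  have hm : mnu par lev ν y ≠ 0 :=
    (ENNReal.toReal_pos (hν y).1.ne' (hν y).2.ne).ne'
  rw [poisson, setIntegral_congr_fun (measurableSet_sector y) hg, setIntegral_const,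
    smul_eq_mul]
  exact inv_mul_cancel_left₀ hm c

lemma poisson_cyl
    (hν : ∀ x : T, 0 < ν (sector par lev x) ∧ ν (sector par lev x) < ⊤)
    {g : PBoundary par lev → ℝ} {J : ℤ}
    (hcyl : ∀ ω ω' : PBoundary par lev, ω.1 J = ω'.1 J → g ω = g ω')
    {j : ℤ} (hj : j ≤ J) (ω : PBoundary par lev) :
    poisson par lev ν g (ω.1 j) = g ω := by
  apply poisson_const hν
  intro ω' hω'
  have h1 : ω'.1 j = ω.1 j := by
    have h := hω'
    rw [mem_sector, pb_lev ω j] at h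
    exact h
  exact hcyl ω' ω (pb_eq_of_agree hj h1)

lemma poisson_sub
    (hν : ∀ x : T, 0 < ν (sector par lev x) ∧ ν (sector par lev x) < ⊤)
    {p' : ℝ≥0∞} (hp'1 : 1 ≤ p') {f g : PBoundary par lev → ℝ}
    (hf : MemLp f p' ν) (hg : MemLp g p' ν) (x : T) :
    poisson par lev ν (fun ω => f ω - g ω) x = poisson par lev ν f x - poisson par lev ν g x := by
  haveI : IsFiniteMeasure (ν.restrict (sector par lev x)) :=
    ⟨by rw [Measure.restrict_apply_univ]; exact (hν x).2⟩
  have hfi : IntegrableOn f (sector par lev x) ν := (hf.restrict _).integrable hp'1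
  have hgi : IntegrableOn g (sector par lev x) ν := (hg.restrict _).integrable hp'1
  rw [poisson, poisson, poisson, ← mul_sub, ← integral_sub hfi hgi]


lemma pointwise_bound
    (hν : ∀ x : T, 0 < ν (sector par lev x) ∧ ν (sector par lev x) < ⊤)
    {p : ℝ} (hp : 1 < p) {h : PBoundary par lev → ℝ}
    (hm : AEStronglyMeasurable h ν) (y : T) :
    (‖poisson par lev ν h y‖₊ : ℝ≥0∞) ^ p ≤
      (ν (sector par lev y))⁻¹ * ∫⁻ ω in sector par lev y, (‖h ω‖₊ : ℝ≥0∞) ^ p ∂ν := by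
  have hp0 : (0 : ℝ) < p := lt_trans zero_lt_one hp
  set S := sector par lev y with hS
  set m := ν S with hmdef
  have hm0 : m ≠ 0 := (hν y).1.ne'
  have hmt : m ≠ ⊤ := (hν y).2.ne
  by_cases hint : IntegrableOn h S ν
  · set A := ∫⁻ ω in S, (‖h ω‖₊ : ℝ≥0∞) ∂ν with hA
    set B := ∫⁻ ω in S, (‖h ω‖₊ : ℝ≥0∞) ^ p ∂ν with hB
    by_cases hBtop : B = ⊤
    · rw [hBtop, ENNReal.mul_top (ENNReal.inv_ne_zero.2 hmt)]
      exact le_top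
    set q := p / (p - 1) with hq
    have hpq : p.HolderConjugate q := Real.HolderConjugate.conjExponent hp
    have hq0 : (0 : ℝ) < q := hpq.symm.pos
    have holder : A ≤ B ^ (1 / p) * m ^ (1 / q) := by
      have hmeas : AEMeasurable (fun ω => (‖h ω‖₊ : ℝ≥0∞)) (ν.restrict S) :=
        (AEStronglyMeasurable.enorm hm.restrict)
      have := ENNReal.lintegral_mul_le_Lp_mul_Lq (ν.restrict S) hpq hmeas
        (aemeasurable_const (b := (1 : ℝ≥0∞)))
      simpa [Measure.restrict_apply_univ, ENNReal.one_rpow, lintegral_const,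
        mul_one] using this
    have hnorm : (‖poisson par lev ν h y‖₊ : ℝ≥0∞) ≤ m⁻¹ * A := by
      rw [poisson]
      have h1 : (‖(mnu par lev ν y)⁻¹ * ∫ ω in S, h ω ∂ν‖₊ : ℝ≥0∞) =
          (‖(mnu par lev ν y)⁻¹‖₊ : ℝ≥0∞) * (‖∫ ω in S, h ω ∂ν‖₊ : ℝ≥0∞) := by
        rw [nnnorm_mul, ENNReal.coe_mul]
      have h2 : (‖(mnu par lev ν y)⁻¹‖₊ : ℝ≥0∞) = m⁻¹ := by
        rw [← enorm_eq_nnnorm, Real.enorm_eq_ofReal_abs, show mnu par lev ν y = m.toReal from rfl,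
          abs_of_nonneg (inv_nonneg.2 ENNReal.toReal_nonneg),
          ENNReal.ofReal_inv_of_pos (ENNReal.toReal_pos hm0 hmt), ENNReal.ofReal_toReal hmt]
      rw [h1, h2]
      exact mul_le_mul_right (enorm_integral_le_lintegral_enorm _) _
    calc (‖poisson par lev ν h y‖₊ : ℝ≥0∞) ^ p
        ≤ (m⁻¹ * A) ^ p := ENNReal.rpow_le_rpow hnorm hp0.le
      _ ≤ (m⁻¹ * (B ^ (1 / p) * m ^ (1 / q))) ^ p :=
          ENNReal.rpow_le_rpow (mul_le_mul_right holder _) hp0.le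
      _ = m⁻¹ * B := by
          have hmB : B ^ (1 / p) ≠ ⊤ :=
            ENNReal.rpow_ne_top_of_nonneg (one_div_nonneg.2 hp0.le) hBtop
          have hmq : m ^ (1 / q) ≠ ⊤ := ENNReal.rpow_ne_top_of_nonneg (one_div_nonneg.2 hq0.le) hmt
          have hBp : (B ^ (1 / p)) ^ p = B := by
            rw [← ENNReal.rpow_mul, one_div_mul_cancel hp0.ne', ENNReal.rpow_one]
          have hmqp : (m ^ (1 / q)) ^ p = m ^ (p - 1) := by
            rw [← ENNReal.rpow_mul]
            congr 1
            rw [hq]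
            field_simp
          rw [ENNReal.mul_rpow_of_ne_top (ENNReal.inv_ne_top.2 hm0)
            (ENNReal.mul_ne_top hmB hmq),
            ENNReal.mul_rpow_of_ne_top hmB hmq, hBp, hmqp,
            ENNReal.inv_rpow]
          rw [mul_comm B (m ^ (p - 1)), ← mul_assoc, ← ENNReal.rpow_neg,
            ← ENNReal.rpow_add _ _ hm0 hmt]
          have hexp : -p + (p - 1) = -1 := by ring
          rw [hexp, ENNReal.rpow_neg_one]
  · rw [poisson, integral_undef hint, mul_zero]
    have : (‖(0:ℝ)‖₊ : ℝ≥0∞) ^ p = 0 := by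
      simp [ENNReal.zero_rpow_of_pos hp0]
    rw [this]
    exact bot_le


lemma contraction [Countable T]
    (hν : ∀ x : T, 0 < ν (sector par lev x) ∧ ν (sector par lev x) < ⊤)
    {p : ℝ} (hp : 1 < p) {h : PBoundary par lev → ℝ}
    (hm : AEStronglyMeasurable h ν) (j : ℤ) :
    ∫⁻ ω, (‖poisson par lev ν h (ω.1 j)‖₊ : ℝ≥0∞) ^ p ∂ν ≤
      ∫⁻ ω, (‖h ω‖₊ : ℝ≥0∞) ^ p ∂ν := by
  have hrestrict : ν = Measure.sum
      (fun y : {y : T // lev y = j} => ν.restrict (sector par lev y.1)) := by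
    have hU : (⋃ y : {y : T // lev y = j}, sector par lev y.1) = Set.univ := by
      ext ω
      simp only [Set.mem_iUnion, Set.mem_univ, iff_true]
      exact ⟨⟨ω.1 j, pb_lev ω j⟩, self_mem_sector ω j⟩
    have hd : Pairwise (Function.onFun Disjoint
        fun y : {y : T // lev y = j} => sector par lev y.1) := by
      intro y z hyz
      exact sector_disjoint_of_level (by rw [y.2, z.2]) (Subtype.coe_ne_coe.2 hyz)
    conv_lhs => rw [← Measure.restrict_univ (μ := ν), ← hU]
    exact Measure.restrict_iUnion hd (fun y => measurableSet_sector _)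
  have hterm : ∀ y : {y : T // lev y = j},
      ∫⁻ ω in sector par lev y.1, (‖poisson par lev ν h (ω.1 j)‖₊ : ℝ≥0∞) ^ p ∂ν ≤
        ∫⁻ ω in sector par lev y.1, (‖h ω‖₊ : ℝ≥0∞) ^ p ∂ν := by
    intro y
    have hconst : ∫⁻ ω in sector par lev y.1, (‖poisson par lev ν h (ω.1 j)‖₊ : ℝ≥0∞) ^ p ∂ν =
        (‖poisson par lev ν h y.1‖₊ : ℝ≥0∞) ^ p * ν (sector par lev y.1) := by
      rw [setLIntegral_congr_fun (measurableSet_sector y.1)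
        ?_, setLIntegral_const]
      intro ω hω
      have : ω.1 j = y.1 := by
        have h2 := hω
        rw [mem_sector, y.2] at h2
        exact h2
      exact congrArg (fun x => (‖poisson par lev ν h x‖₊ : ℝ≥0∞) ^ p) this
    rw [hconst]
    have hpb := pointwise_bound hν hp hm y.1
    calc (‖poisson par lev ν h y.1‖₊ : ℝ≥0∞) ^ p * ν (sector par lev y.1)
        ≤ ((ν (sector par lev y.1))⁻¹ *
            ∫⁻ ω in sector par lev y.1, (‖h ω‖₊ : ℝ≥0∞) ^ p ∂ν) * ν (sector par lev y.1) :=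
          mul_le_mul_left hpb _
      _ = ∫⁻ ω in sector par lev y.1, (‖h ω‖₊ : ℝ≥0∞) ^ p ∂ν := by
          rw [mul_comm, ← mul_assoc, ENNReal.mul_inv_cancel (hν y.1).1.ne' (hν y.1).2.ne,
            one_mul]
  have hsplit : ∀ G : PBoundary par lev → ℝ≥0∞,
      ∫⁻ ω, G ω ∂ν = ∑' y : {y : T // lev y = j}, ∫⁻ ω in sector par lev y.1, G ω ∂ν := by
    intro G
    conv_lhs => rw [hrestrict]
    rw [lintegral_sum_measure]
  calc ∫⁻ ω, (‖poisson par lev ν h (ω.1 j)‖₊ : ℝ≥0∞) ^ p ∂ν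
      = ∑' y : {y : T // lev y = j},
          ∫⁻ ω in sector par lev y.1, (‖poisson par lev ν h (ω.1 j)‖₊ : ℝ≥0∞) ^ p ∂ν :=
        hsplit _
    _ ≤ ∑' y : {y : T // lev y = j},
          ∫⁻ ω in sector par lev y.1, (‖h ω‖₊ : ℝ≥0∞) ^ p ∂ν := ENNReal.tsum_le_tsum hterm
    _ = ∫⁻ ω, (‖h ω‖₊ : ℝ≥0∞) ^ p ∂ν := (hsplit _).symm


lemma nonempty_pb [Nonempty T]
    (hν : ∀ x : T, 0 < ν (sector par lev x) ∧ ν (sector par lev x) < ⊤) :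
    Nonempty (PBoundary par lev) := by
  by_contra hne
  rw [not_nonempty_iff] at hne
  obtain ⟨x⟩ := (inferInstance : Nonempty T)
  have h1 := (hν x).1
  have h2 : sector par lev x = ∅ := Set.eq_empty_of_isEmpty _
  rw [h2, measure_empty] at h1
  exact lt_irrefl 0 h1

lemma approx_indicator (hfin : ∀ x : T, {y : T | par y = x}.Finite)
    (hconn : ∀ x y : T, ∃ n m : ℕ, par^[n] x = par^[m] y)
    (hν : ∀ x : T, 0 < ν (sector par lev x) ∧ ν (sector par lev x) < ⊤)
    (ω₀ : PBoundary par lev) {A : Set (PBoundary par lev)}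
    (hA : MeasurableSet A) (hAfin : ν A < ⊤) {ε : ℝ≥0∞} (hε : ε ≠ 0) :
    ∃ (j : ℤ) (t : Finset T), ν (symmDiff A (elemSet par lev j t)) ≤ ε := by
  set B : ℕ → Set (PBoundary par lev) := fun n => sector par lev (ω₀.1 n) with hB
  have hmono : Monotone B := by
    intro n m hnm ω hω
    rw [hB, mem_sector, pb_lev ω₀ (n:ℤ)] at hω
    have h2 : ω.1 (m:ℤ) = ω₀.1 (m:ℤ) := by
      refine pb_eq_of_agree (j := (n:ℤ)) (J := (m:ℤ)) (by exact_mod_cast hnm) ?_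
      · exact hω.trans rfl
    rw [hB, mem_sector, pb_lev ω₀ (m:ℤ)]
    exact h2
  have hcover : ∀ ω : PBoundary par lev, ∃ n : ℕ, ω ∈ B n := by
    intro ω
    obtain ⟨n, m, h⟩ := hconn (ω.1 0) (ω₀.1 0)
    have h1 : ω.1 (n:ℤ) = par^[n] (ω.1 0) := by
      have := pb_iter ω 0 n
      rwa [zero_add] at this
    have h2 : ω₀.1 (m:ℤ) = par^[m] (ω₀.1 0) := by
      have := pb_iter ω₀ 0 m
      rwa [zero_add] at this
    have h3 : ω.1 (n:ℤ) = ω₀.1 (m:ℤ) := by rw [h1, h2, h]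
    have h4 : (n : ℤ) = (m : ℤ) := by
      have := pb_lev ω (n:ℤ)
      rw [h3, pb_lev ω₀ (m:ℤ)] at this
      omega
    refine ⟨n, ?_⟩
    rw [hB, mem_sector, pb_lev ω₀ (n:ℤ), h4]
    rw [h4] at h3
    exact h3
  have hiInter : (⋂ n : ℕ, A \ B n) = ∅ := by
    ext ω
    simp only [Set.mem_iInter, Set.mem_diff, Set.mem_empty_iff_false, iff_false, not_forall]
    obtain ⟨n, hn⟩ := hcover ω
    exact ⟨n, fun hc => hc.2 hn⟩
  have htend : Filter.Tendsto (fun n : ℕ => ν (A \ B n)) Filter.atTop (nhds 0) := by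
    have := tendsto_measure_iInter_atTop (μ := ν) (s := fun n => A \ B n)
      (fun n => (hA.diff (measurableSet_sector _)).nullMeasurableSet)
      (fun n m hnm => Set.diff_subset_diff_right (hmono hnm))
      ⟨0, (lt_of_le_of_lt (measure_mono Set.diff_subset) hAfin).ne⟩
    rwa [hiInter, measure_empty] at this
  have hhalf : (0 : ℝ≥0∞) < ε / 2 := by
    rw [pos_iff_ne_zero]
    intro hc
    rcases ENNReal.div_eq_zero_iff.1 hc with h1 | h1
    · exact hε h1
    · norm_num at h1
  obtain ⟨K, hK⟩ := (htend.eventually_lt_const hhalf).exists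
  obtain ⟨j, t, hjt⟩ := approx_in_sector hfin hν ω₀ hA (K : ℤ) (ε / 2) hhalf.ne'
  refine ⟨j, t, ?_⟩
  have hincl : symmDiff A (elemSet par lev j t) ⊆
      (A \ B K) ∪ symmDiff (A ∩ sector par lev (ω₀.1 (K:ℤ))) (elemSet par lev j t) := by
    intro ω hω
    rw [Set.mem_symmDiff] at hω
    rcases hω with ⟨h1, h2⟩ | ⟨h1, h2⟩
    · by_cases h3 : ω ∈ B K
      · refine Set.mem_union_right _ ?_
        rw [Set.mem_symmDiff]
        exact Or.inl ⟨⟨h1, h3⟩, h2⟩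
      · exact Set.mem_union_left _ ⟨h1, h3⟩
    · refine Set.mem_union_right _ ?_
      rw [Set.mem_symmDiff]
      exact Or.inr ⟨h1, fun hc => h2 hc.1⟩
  calc ν (symmDiff A (elemSet par lev j t)) ≤
      ν (A \ B K) + ν (symmDiff (A ∩ sector par lev (ω₀.1 (K:ℤ))) (elemSet par lev j t)) :=
        le_trans (measure_mono hincl) (measure_union_le _ _)
    _ ≤ ε / 2 + ε / 2 := add_le_add hK.le hjt
    _ = ε := ENNReal.add_halves ε

end Stmt9Aux

open Stmt9Aux

/-- For `p ∈ (1,∞)` and `f ∈ L^p(∂T,ν)`,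
`lim_{j → −∞} ∫_{∂T} |𝒫f(ω(j)) − f(ω)|^p dν(ω) = 0`. -/
theorem stmt9 {T : Type*} [Nonempty T] (par : T → T) (lev : T → ℤ)
    (hlev : ∀ x : T, lev (par x) = lev x + 1)
    (hfin : ∀ x : T, {y : T | par y = x}.Finite)
    (hsucc : ∀ x : T, ∃ y : T, par y = x)
    (hconn : ∀ x y : T, ∃ n m : ℕ, par^[n] x = par^[m] y)
    (ν : Measure (PBoundary par lev))
    (hν : ∀ x : T, 0 < ν (sector par lev x) ∧ ν (sector par lev x) < ⊤)
    (p : ℝ) (hp : 1 < p)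
    (f : PBoundary par lev → ℝ) (hf : MemLp f (ENNReal.ofReal p) ν) :
    Filter.Tendsto
      (fun j : ℤ => ∫⁻ ω, ENNReal.ofReal (|poisson par lev ν f (ω.1 j) - f ω| ^ p) ∂ν)
      Filter.atBot (nhds 0) := by
  classical
  have hp0 : (0:ℝ) < p := lt_trans zero_lt_one hp
  have hPB : Nonempty (PBoundary par lev) := nonempty_pb hν
  obtain ⟨ω₀⟩ := hPB
  haveI : Countable T := countable_T hfin hconn ω₀
  set p' : ℝ≥0∞ := ENNReal.ofReal p with hp'def
  have hp't : p' ≠ ⊤ := ENNReal.ofReal_ne_top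
  have hp'0 : p' ≠ 0 := by
    rw [hp'def, ne_eq, ENNReal.ofReal_eq_zero]
    linarith
  have hp'1 : 1 ≤ p' := by
    rw [hp'def, ENNReal.one_le_ofReal]
    exact hp.le
  have hp'toReal : p'.toReal = p := ENNReal.toReal_ofReal hp0.le
  have hofReal : ∀ a : ℝ, ENNReal.ofReal (|a| ^ p) = (‖a‖₊ : ℝ≥0∞) ^ p := by
    intro a
    rw [← enorm_eq_nnnorm, Real.enorm_eq_ofReal_abs, ← ENNReal.ofReal_rpow_of_nonneg (abs_nonneg a) hp0.le]
  simp only [hofReal]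
  rw [ENNReal.tendsto_nhds_zero]
  intro ε hε
  set η : ℝ≥0∞ := ε ^ (1/p) with hηdef
  have hη0 : η ≠ 0 := by
    rw [hηdef]
    intro hc
    rw [ENNReal.rpow_eq_zero_iff] at hc
    rcases hc with ⟨h1, _⟩ | ⟨_, h2⟩
    · exact hε.ne' h1
    · have := one_div_pos.2 hp0
      linarith
  have hη3 : η / 3 ≠ 0 := by
    intro hc
    rcases ENNReal.div_eq_zero_iff.1 hc with h1 | h1
    · exact hη0 h1
    · norm_num at h1
  set P : (PBoundary par lev → ℝ) → Prop := fun g =>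
    (∃ J : ℤ, ∀ ω ω' : PBoundary par lev, ω.1 J = ω'.1 J → g ω = g ω') ∧ MemLp g p' ν
    with hPdef
  have hP0 : P 0 := ⟨⟨0, fun _ _ _ => rfl⟩, MemLp.zero⟩
  have h2P : ∀ g, P g → AEStronglyMeasurable g ν := fun g hg => hg.2.aestronglyMeasurable
  have h1P : ∀ f' g, P f' → P g → P (f' + g) := by
    rintro f' g ⟨⟨Jf, hJf⟩, hfLp⟩ ⟨⟨Jg, hJg⟩, hgLp⟩
    refine ⟨⟨min Jf Jg, fun ω ω' h => ?_⟩, hfLp.add hgLp⟩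
    have h1 := hJf ω ω' (pb_eq_of_agree (min_le_left Jf Jg) h)
    have h2 := hJg ω ω' (pb_eq_of_agree (min_le_right Jf Jg) h)
    simp only [Pi.add_apply, h1, h2]
  have h0P : ∀ (c : ℝ) ⦃s : Set (PBoundary par lev)⦄, MeasurableSet s → ν s < ⊤ →
      ∀ {ε' : ℝ≥0∞}, ε' ≠ 0 →
        ∃ g, eLpNorm (g - s.indicator fun _ => c) p' ν ≤ ε' ∧ P g := by
    intro c s hs hsfin ε' hε'
    by_cases hc : c = 0
    · refine ⟨0, ?_, hP0⟩
      subst hc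
      simp
    by_cases hεt : ε' = ⊤
    · exact ⟨0, by rw [hεt]; exact le_top, hP0⟩
    set δ : ℝ≥0∞ := (ε' / ‖c‖₊) ^ p with hδdef
    have hδ0 : δ ≠ 0 := by
      rw [hδdef]
      intro hcon
      rw [ENNReal.rpow_eq_zero_iff] at hcon
      rcases hcon with ⟨h1, _⟩ | ⟨_, h2⟩
      · rcases ENNReal.div_eq_zero_iff.1 h1 with h3 | h3
        · exact hε' h3
        · exact ENNReal.coe_ne_top h3
      · linarith
    obtain ⟨j, t, hjt⟩ := approx_indicator hfin hconn hν ω₀ hs hsfin hδ0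
    refine ⟨(elemSet par lev j t).indicator (fun _ => c), ?_, ⟨j, ?_⟩, ?_⟩
    · have hmono : ∀ ω : PBoundary par lev,
          ‖((elemSet par lev j t).indicator (fun _ => c) - s.indicator fun _ => c) ω‖ ≤
            ‖(symmDiff (elemSet par lev j t) s).indicator (fun _ => c) ω‖ := by
        intro ω
        by_cases h1 : ω ∈ elemSet par lev j t <;> by_cases h2 : ω ∈ s <;>
          simp [Set.indicator_apply, Set.mem_symmDiff, h1, h2]
      refine le_trans (eLpNorm_mono hmono) ?_
      rw [eLpNorm_indicator_const ((measurableSet_elemSet j t).symmDiff hs) hp'0 hp't,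
        hp'toReal]
      have hsd : ν (symmDiff (elemSet par lev j t) s) ≤ δ := by
        rw [symmDiff_comm]
        exact hjt
      calc (‖c‖₊ : ℝ≥0∞) * ν (symmDiff (elemSet par lev j t) s) ^ (1/p)
          ≤ (‖c‖₊ : ℝ≥0∞) * δ ^ (1/p) :=
            mul_le_mul_right (ENNReal.rpow_le_rpow hsd (by positivity)) _
        _ = ε' := by
            rw [hδdef, ← ENNReal.rpow_mul, mul_one_div_cancel hp0.ne', ENNReal.rpow_one]
            exact ENNReal.mul_div_cancel (by simpa using hc) ENNReal.coe_ne_top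
    · intro ω ω' hωω'
      by_cases h1 : ω ∈ elemSet par lev j t
      · have h2 : ω' ∈ elemSet par lev j t := by rwa [mem_elemSet, ← hωω']
        rw [Set.indicator_of_mem h1, Set.indicator_of_mem h2]
      · have h2 : ω' ∉ elemSet par lev j t := by rw [mem_elemSet, ← hωω']; exact h1
        rw [Set.indicator_of_notMem h1, Set.indicator_of_notMem h2]
    · exact memLp_indicator_const p' (measurableSet_elemSet j t) c
        (Or.inr (elemSet_measure_lt_top hν j t).ne)
  obtain ⟨g, hclose, ⟨J, hcyl⟩, hgLp⟩ := hf.induction_dense hp't P h0P h1P h2P hη3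
  refine Filter.eventually_atBot.2 ⟨J, fun j hj => ?_⟩
  have hkey : ∫⁻ ω, (‖poisson par lev ν f (ω.1 j) - f ω‖₊ : ℝ≥0∞) ^ p ∂ν =
      (eLpNorm (fun ω => poisson par lev ν f (ω.1 j) - f ω) p' ν) ^ p := by
    rw [eLpNorm_eq_lintegral_rpow_enorm_toReal hp'0 hp't, hp'toReal, ← ENNReal.rpow_mul,
      one_div_mul_cancel hp0.ne', ENNReal.rpow_one]
    rfl
  have hD : (fun ω => poisson par lev ν f (ω.1 j) - f ω) =
      (fun ω : PBoundary par lev => poisson par lev ν (fun ω' => f ω' - g ω') (ω.1 j)) +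
        fun ω => g ω - f ω := by
    funext ω
    have hexact : poisson par lev ν g (ω.1 j) = g ω := poisson_cyl hν hcyl hj ω
    have hsub := poisson_sub hν hp'1 hf hgLp (ω.1 j)
    simp only [Pi.add_apply]
    rw [hsub, hexact]
    ring
  have hmeasP : AEStronglyMeasurable
      (fun ω : PBoundary par lev => poisson par lev ν (fun ω' => f ω' - g ω') (ω.1 j)) ν :=
    (measurable_comp_eval j _).aestronglyMeasurable
  have hmeasgf : AEStronglyMeasurable (fun ω => g ω - f ω) ν :=
    (hgLp.sub hf).aestronglyMeasurable
  have hcontr : eLpNorm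
      (fun ω : PBoundary par lev => poisson par lev ν (fun ω' => f ω' - g ω') (ω.1 j)) p' ν ≤
        eLpNorm (fun ω => f ω - g ω) p' ν := by
    rw [eLpNorm_eq_lintegral_rpow_enorm_toReal hp'0 hp't, eLpNorm_eq_lintegral_rpow_enorm_toReal hp'0 hp't,
      hp'toReal]
    exact ENNReal.rpow_le_rpow
      (contraction hν hp (hf.sub hgLp).aestronglyMeasurable j) (by positivity)
  have hclose' : eLpNorm (fun ω => f ω - g ω) p' ν ≤ η / 3 := hclose
  have hbound : eLpNorm (fun ω => poisson par lev ν f (ω.1 j) - f ω) p' ν ≤ η / 3 + η / 3 := by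
    rw [hD]
    refine le_trans (eLpNorm_add_le hmeasP hmeasgf hp'1) ?_
    refine add_le_add (le_trans hcontr hclose') ?_
    have : eLpNorm (fun ω => g ω - f ω) p' ν = eLpNorm (fun ω => f ω - g ω) p' ν :=
      eLpNorm_sub_comm g f p' ν
    rw [this]
    exact hclose'
  calc ∫⁻ ω, (‖poisson par lev ν f (ω.1 j) - f ω‖₊ : ℝ≥0∞) ^ p ∂ν
      = (eLpNorm (fun ω => poisson par lev ν f (ω.1 j) - f ω) p' ν) ^ p := hkey
    _ ≤ (η / 3 + η / 3) ^ p := ENNReal.rpow_le_rpow hbound hp0.le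
    _ ≤ η ^ p := by
        refine ENNReal.rpow_le_rpow ?_ hp0.le
        calc η / 3 + η / 3 ≤ η / 3 + η / 3 + η / 3 := self_le_add_right _ _
          _ = η := ENNReal.add_thirds η
    _ = ε := by
        rw [hηdef, ← ENNReal.rpow_mul, one_div_mul_cancel hp0.ne', ENNReal.rpow_one]
end

section
/- Let σ : T → [0,∞) be a Carleson measure with constant C, i.e. Σ_{y ∈ T_x} σ(y) ≤ C ν(∂T_x) for every x ∈ T. Then for every f ∈ L¹(∂T, ν) and every λ > 0, Σ_{x ∈ T : |𝒫f(x)| > λ} σ(x) ≤ (C/λ) ‖f‖_{L¹(ν)}. -/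
open MeasureTheory
open scoped ENNReal NNReal

/-- The sector `T_x = {y ∈ T : y lies below x}`. -/
def tsector {T : Type*} (par : T → T) (x : T) : Set T :=
  {y : T | ∃ n : ℕ, par^[n] y = x}

/-- Iterating the predecessor map along a boundary point. -/
lemma pb_iter {T : Type*} (par : T → T) (lev : T → ℤ) (ω : PBoundary par lev)
    (j : ℤ) (n : ℕ) : par^[n] (ω.1 j) = ω.1 (j + n) := by
  induction n with
  | zero => simp
  | succ n ih =>
    rw [Function.iterate_succ_apply', ih, ω.2.2]
    congr 1
    push_cast
    ring

/-- Level of an iterated predecessor. -/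
lemma lev_iter {T : Type*} (par : T → T) (lev : T → ℤ)
    (hlev : ∀ x : T, lev (par x) = lev x + 1) (x : T) (n : ℕ) :
    lev (par^[n] x) = lev x + n := by
  induction n with
  | zero => simp
  | succ n ih =>
    rw [Function.iterate_succ_apply', hlev, ih]
    push_cast
    ring

/-- Two tree vertices whose boundary sectors share a point are comparable. -/
lemma sector_comp {T : Type*} (par : T → T) (lev : T → ℤ) (a b : T)
    (ω : PBoundary par lev) (ha : ω ∈ sector par lev a) (hb : ω ∈ sector par lev b)
    (hab : lev a ≤ lev b) : par^[(lev b - lev a).toNat] a = b := by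
  have h1 := pb_iter par lev ω (lev a) (lev b - lev a).toNat
  have h2 : lev a + ((lev b - lev a).toNat : ℤ) = lev b := by
    rw [Int.toNat_of_nonneg (by omega)]; ring
  rw [ha] at h1
  rw [h1, h2]
  exact hb

/-- Sectors are measurable. -/
lemma sector_meas {T : Type*} (par : T → T) (lev : T → ℤ)
    (ν : Measure (PBoundary par lev)) (x : T) : MeasurableSet (sector par lev x) :=
  MeasurableSpace.measurableSet_generateFrom ⟨x, rfl⟩

/-- If `σ` is a Carleson measure with constant `C`, then for every
`f ∈ L¹(∂T,ν)` and `λ > 0`, `Σ_{x : |𝒫f(x)| > λ} σ(x) ≤ (C/λ) ‖f‖_{L¹(ν)}`. -/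
theorem stmt10 {T : Type*} [Nonempty T] (par : T → T) (lev : T → ℤ)
    (hlev : ∀ x : T, lev (par x) = lev x + 1)
    (hfin : ∀ x : T, {y : T | par y = x}.Finite)
    (hsucc : ∀ x : T, ∃ y : T, par y = x)
    (hconn : ∀ x y : T, ∃ n m : ℕ, par^[n] x = par^[m] y)
    (ν : Measure (PBoundary par lev))
    (hν : ∀ x : T, 0 < ν (sector par lev x) ∧ ν (sector par lev x) < ⊤)
    (σ : T → ℝ≥0) (C : ℝ≥0)
    (hσ : ∀ x : T, ∑' y : tsector par x, (σ y.1 : ℝ≥0∞) ≤ (C : ℝ≥0∞) * ν (sector par lev x))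
    (f : PBoundary par lev → ℝ) (hf : Integrable f ν)
    (lam : ℝ) (hlam : 0 < lam) :
    ∑' x : {x : T | lam < |poisson par lev ν f x|}, (σ x.1 : ℝ≥0∞)
      ≤ ((C : ℝ≥0∞) / ENNReal.ofReal lam) * ENNReal.ofReal (∫ ω, |f ω| ∂ν) := by
  classical
  set I : ℝ≥0∞ := ENNReal.ofReal (∫ ω, |f ω| ∂ν) with hI
  set L : ℝ≥0∞ := ENNReal.ofReal lam with hL
  have hL0 : L ≠ 0 := by simp [hL, ENNReal.ofReal_pos.2 hlam, (ENNReal.ofReal_pos.2 hlam).ne']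
  have hLtop : L ≠ ⊤ := by simp [hL]
  -- key pointwise estimate
  have hA : ∀ x : T, lam < |poisson par lev ν f x| →
      L * ν (sector par lev x) ≤ ∫⁻ ω in sector par lev x, ENNReal.ofReal |f ω| ∂ν := by
    intro x hx
    set S := sector par lev x with hS
    have h0 := (hν x).1
    have htop := (hν x).2
    have hmpos : 0 < mnu par lev ν x := ENNReal.toReal_pos h0.ne' htop.ne
    have hint : Integrable (fun ω => |f ω|) (ν.restrict S) := (hf.abs).restrict
    have habs : |poisson par lev ν f x| ≤ (mnu par lev ν x)⁻¹ * ∫ ω in S, |f ω| ∂ν := by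
      rw [poisson, abs_mul, abs_inv, abs_of_pos hmpos]
      gcongr
      calc |∫ ω in S, f ω ∂ν| ≤ ∫ ω in S, |f ω| ∂ν := by
            simpa [Real.norm_eq_abs] using norm_integral_le_integral_norm (μ := ν.restrict S) f
        _ ≤ ∫ ω in S, |f ω| ∂ν := le_refl _
    have hx2 : lam < (mnu par lev ν x)⁻¹ * ∫ ω in S, |f ω| ∂ν := lt_of_lt_of_le hx habs
    have hreal : lam * mnu par lev ν x ≤ ∫ ω in S, |f ω| ∂ν := by
      rw [← div_eq_inv_mul] at hx2
      exact ((lt_div_iff₀ hmpos).mp hx2).le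
    calc L * ν S = ENNReal.ofReal (lam * mnu par lev ν x) := by
          rw [ENNReal.ofReal_mul hlam.le, hL, mnu, ENNReal.ofReal_toReal htop.ne]
      _ ≤ ENNReal.ofReal (∫ ω in S, |f ω| ∂ν) := ENNReal.ofReal_le_ofReal hreal
      _ = ∫⁻ ω in S, ENNReal.ofReal |f ω| ∂ν :=
          ofReal_integral_eq_lintegral_ofReal hint
            (Filter.Eventually.of_forall fun ω => abs_nonneg _)
  -- reduce to finite subsets
  rw [ENNReal.tsum_eq_iSup_sum]
  refine iSup_le fun s => ?_
  set F : Finset T := s.image Subtype.val with hFdef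
  have hFsum : ∑ x ∈ s, (σ x.1 : ℝ≥0∞) = ∑ x ∈ F, (σ x : ℝ≥0∞) := by
    rw [hFdef, Finset.sum_image (fun a _ b _ h => Subtype.ext h)]
  have hFprop : ∀ x ∈ F, lam < |poisson par lev ν f x| := by
    intro x hx
    rw [hFdef, Finset.mem_image] at hx
    obtain ⟨y, _, rfl⟩ := hx
    exact y.2
  -- choice of maximal ancestor within F
  have hex : ∀ x ∈ F, ∃ b ∈ F.filter (fun y => x ∈ tsector par y),
      ∀ b' ∈ F.filter (fun y => x ∈ tsector par y), lev b' ≤ lev b := by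
    intro x hx
    exact Finset.exists_max_image _ lev ⟨x, by
      simp only [Finset.mem_filter]
      exact ⟨hx, ⟨0, rfl⟩⟩⟩
  set g : T → T := fun x => if hx : x ∈ F then (hex x hx).choose else x with hgdef
  have hg : ∀ x ∈ F, g x ∈ F ∧ x ∈ tsector par (g x) ∧
      ∀ b' ∈ F, x ∈ tsector par b' → lev b' ≤ lev (g x) := by
    intro x hx
    have h := (hex x hx).choose_spec
    rw [Finset.mem_filter] at h
    simp only [hgdef, dif_pos hx]
    exact ⟨h.1.1, h.1.2, fun b' hb1 hb2 => h.2 b' (Finset.mem_filter.2 ⟨hb1, hb2⟩)⟩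
  set M : Finset T := F.image g with hMdef
  -- the maximal vertices are pairwise incomparable, so their sectors are disjoint
  have hkey : ∀ x1 ∈ F, ∀ x2 ∈ F, ∀ ω : PBoundary par lev,
      ω ∈ sector par lev (g x1) → ω ∈ sector par lev (g x2) →
      lev (g x1) ≤ lev (g x2) → g x1 = g x2 := by
    intro x1 h1 x2 h2 ω hw1 hw2 hll
    obtain ⟨hgF1, ⟨k, hk⟩, hmax1⟩ := hg x1 h1
    obtain ⟨hgF2, _, _⟩ := hg x2 h2
    set n := (lev (g x2) - lev (g x1)).toNat with hn
    have hiter : par^[n] (g x1) = g x2 := sector_comp par lev _ _ ω hw1 hw2 hll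
    have hx1le : x1 ∈ tsector par (g x2) := ⟨n + k, by
      rw [Function.iterate_add_apply, hk, hiter]⟩
    have hlev2 : lev (g x2) ≤ lev (g x1) := hmax1 (g x2) hgF2 hx1le
    have hlevn : lev (par^[n] (g x1)) = lev (g x1) + n := lev_iter par lev hlev _ n
    rw [hiter] at hlevn
    have hn0 : n = 0 := by omega
    rw [← hiter, hn0]
    simp
  have hdisj : (↑M : Set T).PairwiseDisjoint (fun m' => sector par lev m') := by
    intro m1 hm1 m2 hm2 hne
    rw [Finset.coe_image, Set.mem_image] at hm1 hm2
    obtain ⟨x1, hx1, rfl⟩ := hm1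
    obtain ⟨x2, hx2, rfl⟩ := hm2
    simp only [Function.onFun]
    rw [Set.disjoint_left]
    intro ω hw1 hw2
    rcases le_total (lev (g x1)) (lev (g x2)) with h | h
    · exact hne (hkey x1 (by exact_mod_cast hx1) x2 (by exact_mod_cast hx2) ω hw1 hw2 h)
    · exact hne ((hkey x2 (by exact_mod_cast hx2) x1 (by exact_mod_cast hx1) ω hw2 hw1 h).symm)
  -- fiberwise decomposition of the sum over F
  have hfib : ∑ x ∈ F, (σ x : ℝ≥0∞)
      = ∑ m' ∈ M, ∑ x ∈ F.filter (fun x => g x = m'), (σ x : ℝ≥0∞) :=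
    (Finset.sum_fiberwise_of_maps_to (fun x hx => Finset.mem_image_of_mem g hx) _).symm
  have hinner : ∀ m' ∈ M, ∑ x ∈ F.filter (fun x => g x = m'), (σ x : ℝ≥0∞)
      ≤ (C : ℝ≥0∞) * ν (sector par lev m') := by
    intro m' hm'
    refine le_trans (le_trans ?_
      (le_of_eq (tsum_subtype (tsector par m') (fun y => (σ y : ℝ≥0∞))).symm)) (hσ m')
    calc ∑ x ∈ F.filter (fun x => g x = m'), (σ x : ℝ≥0∞)
        = ∑ x ∈ F.filter (fun x => g x = m'),
            (tsector par m').indicator (fun y => (σ y : ℝ≥0∞)) x := by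
          refine Finset.sum_congr rfl fun x hx => ?_
          rw [Finset.mem_filter] at hx
          rw [Set.indicator_of_mem]
          rw [← hx.2]
          exact (hg x hx.1).2.1
      _ ≤ ∑' x : T, (tsector par m').indicator (fun y => (σ y : ℝ≥0∞)) x :=
          ENNReal.sum_le_tsum _
  -- the measure with density |f|
  set μ' : Measure (PBoundary par lev) := ν.withDensity (fun ω => ENNReal.ofReal |f ω|) with hμ'
  have hμS : ∀ x : T, μ' (sector par lev x) = ∫⁻ ω in sector par lev x, ENNReal.ofReal |f ω| ∂ν :=
    fun x => withDensity_apply _ (sector_meas par lev ν x)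
  have hμuniv : μ' Set.univ = I := by
    rw [hμ', hI, withDensity_apply _ MeasurableSet.univ, Measure.restrict_univ,
      ofReal_integral_eq_lintegral_ofReal hf.abs
        (Filter.Eventually.of_forall fun ω => abs_nonneg _)]
  have hMsum : L * ∑ m' ∈ M, ν (sector par lev m') ≤ I := by
    rw [Finset.mul_sum]
    calc ∑ m' ∈ M, L * ν (sector par lev m')
        ≤ ∑ m' ∈ M, μ' (sector par lev m') := by
          refine Finset.sum_le_sum fun m' hm' => ?_
          rw [hμS]
          refine hA m' (hFprop m' ?_)
          rw [hMdef, Finset.mem_image] at hm'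
          obtain ⟨x, hx, rfl⟩ := hm'
          exact (hg x hx).1
      _ = μ' (⋃ m' ∈ M, sector par lev m') :=
          (measure_biUnion_finset hdisj fun m' _ => sector_meas par lev ν m').symm
      _ ≤ μ' Set.univ := measure_mono (Set.subset_univ _)
      _ = I := hμuniv
  have hMsum' : ∑ m' ∈ M, ν (sector par lev m') ≤ I / L := by
    rw [ENNReal.le_div_iff_mul_le (Or.inl hL0) (Or.inl hLtop), mul_comm]
    exact hMsum
  calc ∑ x ∈ s, (σ x.1 : ℝ≥0∞) = ∑ x ∈ F, (σ x : ℝ≥0∞) := hFsum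
    _ = ∑ m' ∈ M, ∑ x ∈ F.filter (fun x => g x = m'), (σ x : ℝ≥0∞) := hfib
    _ ≤ ∑ m' ∈ M, (C : ℝ≥0∞) * ν (sector par lev m') := Finset.sum_le_sum hinner
    _ = (C : ℝ≥0∞) * ∑ m' ∈ M, ν (sector par lev m') := by rw [Finset.mul_sum]
    _ ≤ (C : ℝ≥0∞) * (I / L) := by gcongr
    _ = ((C : ℝ≥0∞) / L) * I := by
        rw [ENNReal.div_eq_inv_mul, ENNReal.div_eq_inv_mul]
        ring
end

section
/- For every p ∈ (1, ∞) and every f ∈ L^p(∂T, ν) one has ‖f‖_{L^p(∂T,ν)}^p ≤ ‖𝒫f‖_{H^p}^p = sup_{k ∈ ℤ} Σ_{x : ℓ(x)=k} |𝒫f(x)|^p m_ν(x). Consequently ‖𝒫f‖_{H^p} = ‖f‖_{L^p(∂T,ν)}. -/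
open MeasureTheory
open scoped ENNReal NNReal

section helpers
variable {T : Type*} (par : T → T) (lev : T → ℤ)

lemma pb_iterate (ω : PBoundary par lev) (k : ℤ) : ∀ n : ℕ, ω.1 (k + n) = par^[n] (ω.1 k) := by
  intro n
  induction n with
  | zero => simp
  | succ n ih =>
      have : (k + (n+1 : ℕ)) = (k + n) + 1 := by push_cast; ring
      rw [this, ← ω.2.2, ih, Function.iterate_succ_apply']

lemma mem_sector_iff {x : T} {ω : PBoundary par lev} : ω ∈ sector par lev x ↔ ω.1 (lev x) = x :=
  Iff.rfl

lemma measurableSet_sector (x : T) : MeasurableSet (sector par lev x) :=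
  MeasurableSpace.measurableSet_generateFrom ⟨x, rfl⟩

lemma mem_sector_self (ω : PBoundary par lev) (k : ℤ) : ω ∈ sector par lev (ω.1 k) := by
  rw [mem_sector_iff, ω.2.1]

/-- nesting/disjointness of sectors -/
lemma sector_nest {x y : T} (h : lev x ≤ lev y) :
    (par^[(lev y - lev x).toNat] x = y ∧ sector par lev x ⊆ sector par lev y) ∨
    Disjoint (sector par lev x) (sector par lev y) := by
  set n := (lev y - lev x).toNat with hn
  have hkn : lev x + (n : ℤ) = lev y := by
    rw [hn, Int.toNat_of_nonneg (by omega)]; ring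
  by_cases hxy : par^[n] x = y
  · left
    refine ⟨hxy, fun ω hω => ?_⟩
    have := pb_iterate par lev ω (lev x) n
    rw [hkn] at this
    rw [mem_sector_iff] at hω ⊢
    rw [this, hω, hxy]
  · right
    rw [Set.disjoint_left]
    intro ω hω hω'
    have := pb_iterate par lev ω (lev x) n
    rw [hkn] at this
    rw [mem_sector_iff] at hω hω'
    exact hxy (by rw [← hω, ← this, hω'])

lemma sector_subset_or_disjoint {x y : T} (h : lev x ≤ lev y) :
    sector par lev x ⊆ sector par lev y ∨ Disjoint (sector par lev x) (sector par lev y) :=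
  (sector_nest par lev h).imp And.right id

lemma sector_disjoint {x y : T} (h : lev x = lev y) (hxy : x ≠ y) :
    Disjoint (sector par lev x) (sector par lev y) := by
  rw [Set.disjoint_left]
  intro ω hω hω'
  rw [mem_sector_iff] at hω hω'
  exact hxy (by rw [← hω, h, hω'])

lemma iUnion_sector (k : ℤ) : ⋃ x : {x : T // lev x = k}, sector par lev x.1 = Set.univ := by
  ext ω
  simp only [Set.mem_iUnion, Set.mem_univ, iff_true]
  exact ⟨⟨ω.1 k, ω.2.1 k⟩, mem_sector_self par lev ω k⟩

lemma countable_T [Nonempty T] (hfin : ∀ x : T, {y : T | par y = x}.Finite)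
    (hconn : ∀ x y : T, ∃ n m : ℕ, par^[n] x = par^[m] y) : Countable T := by
  have hpre : ∀ (n : ℕ) (z : T), (par^[n] ⁻¹' {z}).Finite := by
    intro n
    induction n with
    | zero => intro z; simp [Set.finite_singleton]
    | succ n ih =>
        intro z
        have : par^[n+1] ⁻¹' {z} = ⋃ x ∈ (par^[n] ⁻¹' {z}), {y | par y = x} := by
          ext y
          simp [Function.iterate_succ_apply, eq_comm]
        rw [this]
        exact Set.Finite.biUnion (ih z) (fun x _ => hfin x)
  obtain ⟨x0⟩ := ‹Nonempty T›
  have : (Set.univ : Set T).Countable := by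
    have hsub : (Set.univ : Set T) ⊆ ⋃ nm : ℕ × ℕ, (par^[nm.1] ⁻¹' {par^[nm.2] x0} : Set T) := by
      intro y _
      obtain ⟨n, m, h⟩ := hconn y x0
      exact Set.mem_iUnion.2 ⟨(n, m), h⟩
    exact (Set.countable_iUnion (fun nm : ℕ × ℕ => (hpre nm.1 (par^[nm.2] x0)).countable)).mono hsub
  rw [Set.countable_univ_iff] at this
  exact this

end helpers

section abstractmink
variable {ι : Type*}

/-- abstract weighted Minkowski inequality for tsums -/
lemma tsum_Lp_add {p : ℝ} (hp : 1 ≤ p) (w : ι → ℝ≥0∞) (a b : ι → ℝ) :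
    (∑' i, ENNReal.ofReal (|a i + b i| ^ p) * w i) ^ (1/p) ≤
      (∑' i, ENNReal.ofReal (|a i| ^ p) * w i) ^ (1/p) +
      (∑' i, ENNReal.ofReal (|b i| ^ p) * w i) ^ (1/p) := by
  letI : MeasurableSpace ι := ⊤
  have hmeas : ∀ F : ι → ℝ≥0∞, Measurable F := fun F s _ => trivial
  set μ : Measure ι := Measure.sum (fun i => w i • Measure.dirac i) with hμ
  have key : ∀ F : ι → ℝ≥0∞, ∫⁻ i, F i ∂μ = ∑' i, F i * w i := by
    intro F
    rw [hμ, lintegral_sum_measure]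
    congr 1
    ext i
    rw [lintegral_smul_measure, lintegral_dirac' _ (hmeas F), smul_eq_mul, mul_comm]
  have hp0 : 0 < p := lt_of_lt_of_le one_pos hp
  set F : ι → ℝ≥0∞ := fun i => ENNReal.ofReal |a i|
  set G : ι → ℝ≥0∞ := fun i => ENNReal.ofReal |b i|
  have h1 : (∑' i, ENNReal.ofReal (|a i + b i| ^ p) * w i) ≤ ∫⁻ i, (F + G) i ^ p ∂μ := by
    rw [key]
    refine ENNReal.tsum_le_tsum fun i => mul_le_mul_left ?_ _
    rw [← ENNReal.ofReal_rpow_of_nonneg (abs_nonneg _) hp0.le]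
    refine ENNReal.rpow_le_rpow ?_ hp0.le
    calc ENNReal.ofReal |a i + b i| ≤ ENNReal.ofReal (|a i| + |b i|) :=
          ENNReal.ofReal_le_ofReal (abs_add_le _ _)
    _ = F i + G i := ENNReal.ofReal_add (abs_nonneg _) (abs_nonneg _)
    _ = (F + G) i := rfl
  have h2 := ENNReal.lintegral_Lp_add_le (μ := μ) (hmeas F).aemeasurable
    (hmeas G).aemeasurable hp
  have e1 : ∫⁻ i, F i ^ p ∂μ = ∑' i, ENNReal.ofReal (|a i| ^ p) * w i := by
    rw [key]; congr 1; ext i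
    rw [ENNReal.ofReal_rpow_of_nonneg (abs_nonneg _) hp0.le]
  have e2 : ∫⁻ i, G i ^ p ∂μ = ∑' i, ENNReal.ofReal (|b i| ^ p) * w i := by
    rw [key]; congr 1; ext i
    rw [ENNReal.ofReal_rpow_of_nonneg (abs_nonneg _) hp0.le]
  calc (∑' i, ENNReal.ofReal (|a i + b i| ^ p) * w i) ^ (1/p)
      ≤ (∫⁻ i, (F + G) i ^ p ∂μ) ^ (1/p) := ENNReal.rpow_le_rpow h1 (by positivity)
    _ ≤ (∫⁻ i, F i ^ p ∂μ) ^ (1/p) + (∫⁻ i, G i ^ p ∂μ) ^ (1/p) := h2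
    _ = _ := by rw [e1, e2]

end abstractmink

section holder
variable {α : Type*} [MeasurableSpace α] {ν : Measure α}

/-- per-set Hölder bound for the average -/
lemma avg_rpow_le {p : ℝ} (hp : 1 < p) {A : Set α} (hA : MeasurableSet A)
    (hA0 : 0 < ν A) (hAtop : ν A < ⊤) {f : α → ℝ} (hf : AEMeasurable f ν) :
    ENNReal.ofReal (|(ν A).toReal⁻¹ * ∫ ω in A, f ω ∂ν| ^ p) * ν A
      ≤ ∫⁻ ω in A, ENNReal.ofReal (|f ω| ^ p) ∂ν := by
  have hp0 : 0 < p := lt_trans one_pos hp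
  set m : ℝ≥0∞ := ν A with hm
  have hm0 : m ≠ 0 := hA0.ne'
  have hmtop : m ≠ ⊤ := hAtop.ne
  set q : ℝ := p / (p - 1) with hqdef
  have hpq : p.HolderConjugate q := Real.HolderConjugate.conjExponent hp
  set X : ℝ≥0∞ := ∫⁻ ω in A, ENNReal.ofReal (|f ω| ^ p) ∂ν with hX
  set Y : ℝ≥0∞ := ENNReal.ofReal |∫ ω in A, f ω ∂ν| with hY
  -- step 0 : rewrite LHS
  have habs : |(ν A).toReal⁻¹ * ∫ ω in A, f ω ∂ν| = (m.toReal)⁻¹ * |∫ ω in A, f ω ∂ν| := by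
    rw [abs_mul, abs_of_nonneg (inv_nonneg.2 ENNReal.toReal_nonneg)]
  have hofm : ENNReal.ofReal (m.toReal)⁻¹ = m⁻¹ := by
    rw [ENNReal.ofReal_inv_of_pos (ENNReal.toReal_pos hm0 hmtop), ENNReal.ofReal_toReal hmtop]
  have hLHS : ENNReal.ofReal (|(ν A).toReal⁻¹ * ∫ ω in A, f ω ∂ν| ^ p) * ν A
      = (m⁻¹) ^ p * Y ^ p * m := by
    rw [habs, Real.mul_rpow (inv_nonneg.2 ENNReal.toReal_nonneg) (abs_nonneg _),
      ENNReal.ofReal_mul (by positivity), ← ENNReal.ofReal_rpow_of_nonneg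
        (inv_nonneg.2 ENNReal.toReal_nonneg) hp0.le, hofm,
      ← ENNReal.ofReal_rpow_of_nonneg (abs_nonneg _) hp0.le]
  rw [hLHS]
  -- step 1 : Y ≤ ∫⁻ |f|
  have h1 : Y ≤ ∫⁻ ω in A, (‖f ω‖₊ : ℝ≥0∞) ∂ν := by
    rw [hY, ← Real.norm_eq_abs, ofReal_norm]
    exact enorm_integral_le_lintegral_enorm _
  -- step 2 : Hölder
  have h2 : ∫⁻ ω in A, (‖f ω‖₊ : ℝ≥0∞) ∂ν ≤ X ^ (1/p) * m ^ (1/q) := by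
    have := ENNReal.lintegral_mul_le_Lp_mul_Lq (ν.restrict A) hpq
      (hf.restrict.enorm) (aemeasurable_const (b := (1 : ℝ≥0∞)))
    simp only [Pi.mul_apply, mul_one] at this
    refine le_trans this ?_
    have hXeq : ∫⁻ ω in A, ‖f ω‖ₑ ^ p ∂ν = X := by
      rw [hX]; congr 1; ext ω
      rw [← ofReal_norm, Real.norm_eq_abs,
        ENNReal.ofReal_rpow_of_nonneg (abs_nonneg _) hp0.le]
    have hone : ∫⁻ _ω in A, (1 : ℝ≥0∞) ^ q ∂ν = m := by
      simp [ENNReal.one_rpow, hm, Measure.restrict_apply_univ]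
    rw [hXeq, hone]
  have hY2 : Y ≤ X ^ (1/p) * m ^ (1/q) := le_trans h1 h2
  -- step 3 : combine
  have hq1 : (1/p) * p = 1 := by field_simp
  have hq2 : (1/q) * p = p - 1 := by
    rw [hqdef]; field_simp
  have h3 : Y ^ p ≤ X * m ^ (p - 1) := by
    calc Y ^ p ≤ (X ^ (1/p) * m ^ (1/q)) ^ p := ENNReal.rpow_le_rpow hY2 hp0.le
    _ = X * m ^ (p - 1) := by
        rw [ENNReal.mul_rpow_of_nonneg _ _ hp0.le, ← ENNReal.rpow_mul, ← ENNReal.rpow_mul,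
          hq1, hq2, ENNReal.rpow_one]
  have hmp0 : m ^ p ≠ 0 := (ENNReal.rpow_pos (hA0.trans_le le_rfl) hmtop).ne'
  have hmptop : m ^ p ≠ ⊤ := ENNReal.rpow_ne_top_of_nonneg hp0.le hmtop
  have hsum : m ^ (p - 1) * m = m ^ p := by
    have h := ENNReal.rpow_add (x := m) (p-1) 1 hm0 hmtop
    rw [ENNReal.rpow_one, sub_add_cancel] at h
    exact h.symm
  calc (m⁻¹) ^ p * Y ^ p * m ≤ (m⁻¹) ^ p * (X * m ^ (p-1)) * m := by
        exact mul_le_mul_left (mul_le_mul_right h3 _) _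
  _ = X * (m ^ (p-1) * m) * (m⁻¹) ^ p := by ring
  _ = X * (m ^ p * (m ^ p)⁻¹) := by rw [hsum, ENNReal.inv_rpow]; ring
  _ = X := by rw [ENNReal.mul_inv_cancel hmp0 hmptop, mul_one]

end holder

section part3
variable {T : Type*} (par : T → T) (lev : T → ℤ)

lemma lintegral_partition [Countable T] (ν : Measure (PBoundary par lev)) (k : ℤ)
    (G : PBoundary par lev → ℝ≥0∞) :
    ∫⁻ ω, G ω ∂ν = ∑' x : {x : T // lev x = k}, ∫⁻ ω in sector par lev x.1, G ω ∂ν := by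
  have hd : Pairwise (Function.onFun Disjoint
      fun x : {x : T // lev x = k} => sector par lev x.1) :=
    fun i j hij => sector_disjoint par lev (by rw [i.2, j.2]) (fun h => hij (Subtype.ext h))
  rw [← setLIntegral_univ, ← iUnion_sector par lev k,
    lintegral_iUnion (s := fun x : {x : T // lev x = k} => sector par lev x.1) (fun x => measurableSet_sector par lev x.1) hd]

lemma term_le_lintegral [Countable T] {ν : Measure (PBoundary par lev)}
    (hν : ∀ x : T, 0 < ν (sector par lev x) ∧ ν (sector par lev x) < ⊤)
    {p : ℝ} (hp : 1 < p) {f : PBoundary par lev → ℝ} (hf : AEMeasurable f ν) (k : ℤ) :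
    ∑' x : {x : T // lev x = k},
        ENNReal.ofReal (|poisson par lev ν f x.1| ^ p) * ν (sector par lev x.1)
      ≤ ∫⁻ ω, ENNReal.ofReal (|f ω| ^ p) ∂ν := by
  rw [lintegral_partition par lev ν k]
  refine ENNReal.tsum_le_tsum fun x => ?_
  have := avg_rpow_le hp (measurableSet_sector par lev x.1) (hν x.1).1 (hν x.1).2 hf
  simpa [poisson, mnu] using this

lemma eLpNorm_ofReal_abs {p : ℝ} (hp : 1 < p) {ν : Measure (PBoundary par lev)}
    (g : PBoundary par lev → ℝ) :
    eLpNorm g (ENNReal.ofReal p) ν = (∫⁻ ω, ENNReal.ofReal (|g ω| ^ p) ∂ν) ^ (1/p) := by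
  have hp0 : (0:ℝ) < p := lt_trans one_pos hp
  rw [eLpNorm_eq_lintegral_rpow_enorm_toReal (by simp [ENNReal.ofReal_eq_zero]; linarith)
    ENNReal.ofReal_ne_top, ENNReal.toReal_ofReal hp0.le]
  congr 1
  apply lintegral_congr
  intro ω
  rw [← ofReal_norm, Real.norm_eq_abs,
    ENNReal.ofReal_rpow_of_nonneg (abs_nonneg _) hp0.le]

end part3

section algebra
variable {T : Type*} (par : T → T) (lev : T → ℤ)

/-- sets that are (eventually) unions of deep-level sectors -/
def levAlg : Set (Set (PBoundary par lev)) :=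
  {t | MeasurableSet t ∧ ∃ k0 : ℤ, ∀ x : T, lev x ≤ k0 →
    sector par lev x ⊆ t ∨ Disjoint (sector par lev x) t}

lemma isSetAlgebra_levAlg : MeasureTheory.IsSetAlgebra (levAlg par lev) where
  empty_mem := ⟨MeasurableSet.empty, 0, fun x _ => Or.inr (Set.disjoint_empty _)⟩
  compl_mem := by
    rintro t ⟨ht, k0, h⟩
    refine ⟨ht.compl, k0, fun x hx => ?_⟩
    rcases h x hx with hsub | hd
    · exact Or.inr (Set.disjoint_left.2 fun ω hω hωc => hωc (hsub hω))
    · exact Or.inl (fun ω hω => Set.disjoint_left.1 hd hω)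
  union_mem := by
    rintro s t ⟨hs, ks, h1⟩ ⟨ht, kt, h2⟩
    refine ⟨hs.union ht, min ks kt, fun x hx => ?_⟩
    rcases h1 x (le_trans hx (min_le_left _ _)) with hsub | hd1
    · exact Or.inl (hsub.trans Set.subset_union_left)
    · rcases h2 x (le_trans hx (min_le_right _ _)) with hsub | hd2
      · exact Or.inl (hsub.trans Set.subset_union_right)
      · exact Or.inr (Set.disjoint_union_right.2 ⟨hd1, hd2⟩)

lemma sector_mem_levAlg (y : T) : sector par lev y ∈ levAlg par lev :=
  ⟨measurableSet_sector par lev y, lev y, fun x hx => sector_subset_or_disjoint par lev hx⟩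

lemma generateFrom_levAlg :
    (inferInstance : MeasurableSpace (PBoundary par lev))
      = MeasurableSpace.generateFrom (levAlg par lev) := by
  apply le_antisymm
  · exact MeasurableSpace.generateFrom_le
      (fun t ht => MeasurableSpace.measurableSet_generateFrom
        (by rcases ht with ⟨y, rfl⟩; exact sector_mem_levAlg par lev y))
  · exact MeasurableSpace.generateFrom_le (fun t ht => ht.1)

lemma lev_iterate (hlev : ∀ x : T, lev (par x) = lev x + 1) (x : T) :
    ∀ n : ℕ, lev (par^[n] x) = lev x + n := by
  intro n
  induction n with
  | zero => simp
  | succ n ih => rw [Function.iterate_succ_apply', hlev, ih]; push_cast; ring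

lemma exists_preimage (hsucc : ∀ x : T, ∃ y : T, par y = x) (x : T) :
    ∀ n : ℕ, ∃ y : T, par^[n] y = x := by
  intro n
  induction n with
  | zero => exact ⟨x, rfl⟩
  | succ n ih =>
      obtain ⟨y, hy⟩ := ih
      obtain ⟨z, hz⟩ := hsucc y
      exact ⟨z, by rw [Function.iterate_succ_apply, hz, hy]⟩

lemma exists_lev [Nonempty T] (hlev : ∀ x : T, lev (par x) = lev x + 1)
    (hsucc : ∀ x : T, ∃ y : T, par y = x) (k : ℤ) : ∃ z : T, lev z = k := by
  obtain ⟨x0⟩ := ‹Nonempty T›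
  rcases le_or_gt (lev x0) k with h | h
  · refine ⟨par^[(k - lev x0).toNat] x0, ?_⟩
    rw [lev_iterate par lev hlev, Int.toNat_of_nonneg (by omega)]; ring
  · obtain ⟨y, hy⟩ := exists_preimage par hsucc x0 ((lev x0 - k).toNat)
    refine ⟨y, ?_⟩
    have := lev_iterate par lev hlev y ((lev x0 - k).toNat)
    rw [hy, Int.toNat_of_nonneg (by omega)] at this
    omega

lemma measureDense_levAlg [Nonempty T] [Countable T]
    (hlev : ∀ x : T, lev (par x) = lev x + 1)
    (hsucc : ∀ x : T, ∃ y : T, par y = x)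
    (ν : Measure (PBoundary par lev))
    (hν : ∀ x : T, 0 < ν (sector par lev x) ∧ ν (sector par lev x) < ⊤) :
    ν.MeasureDense (levAlg par lev) := by
  have hL0 : ({x : T | lev x = 0} : Set T).Countable := Set.to_countable _
  have hL0ne : ({x : T | lev x = 0} : Set T).Nonempty := exists_lev par lev hlev hsucc 0
  obtain ⟨e, he⟩ := Set.Countable.exists_eq_range hL0 hL0ne
  have hlev0 : ∀ n, lev (e n) = 0 := by
    intro n
    have : e n ∈ {x : T | lev x = 0} := he ▸ Set.mem_range_self n
    exact this
  refine Measure.MeasureDense.of_generateFrom_isSetAlgebra_sigmaFinite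
    (isSetAlgebra_levAlg par lev) ⟨fun n => sector par lev (e n),
      fun n => sector_mem_levAlg par lev (e n), fun n => (hν (e n)).2, ?_⟩
    (generateFrom_levAlg par lev)
  ext ω
  simp only [Set.mem_iUnion, Set.mem_univ, iff_true]
  have : ω.1 0 ∈ {x : T | lev x = 0} := ω.2.1 0
  rw [he] at this
  obtain ⟨n, hn⟩ := this
  refine ⟨n, ?_⟩
  rw [mem_sector_iff, hlev0 n]
  exact hn.symm

end algebra

section approx
variable {T : Type*} (par : T → T) (lev : T → ℤ)

/-- `h` is constant on all sectors at levels `≤ k0` -/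
def LevelConst (h : PBoundary par lev → ℝ) (k0 : ℤ) : Prop :=
  ∀ x : T, lev x ≤ k0 → ∃ c : ℝ, ∀ ω ∈ sector par lev x, h ω = c

lemma levelConst_add {h1 h2 : PBoundary par lev → ℝ} {k1 k2 : ℤ}
    (H1 : LevelConst par lev h1 k1) (H2 : LevelConst par lev h2 k2) :
    LevelConst par lev (h1 + h2) (min k1 k2) := by
  intro x hx
  obtain ⟨c1, hc1⟩ := H1 x (le_trans hx (min_le_left _ _))
  obtain ⟨c2, hc2⟩ := H2 x (le_trans hx (min_le_right _ _))
  exact ⟨c1 + c2, fun ω hω => by simp [hc1 ω hω, hc2 ω hω]⟩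

lemma exists_levelConst_approx [Nonempty T] [Countable T]
    (hlev : ∀ x : T, lev (par x) = lev x + 1)
    (hsucc : ∀ x : T, ∃ y : T, par y = x)
    {ν : Measure (PBoundary par lev)}
    (hν : ∀ x : T, 0 < ν (sector par lev x) ∧ ν (sector par lev x) < ⊤)
    {pp : ℝ≥0∞} (hpp1 : 1 ≤ pp) (hpptop : pp ≠ ⊤)
    {f : PBoundary par lev → ℝ} (hf : MemLp f pp ν) {ε : ℝ≥0∞} (hε : ε ≠ 0) :
    ∃ h : PBoundary par lev → ℝ, MemLp h pp ν ∧ eLpNorm (f - h) pp ν < ε ∧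
      ∃ k0 : ℤ, LevelConst par lev h k0 := by
  have hpp0 : pp ≠ 0 := fun h => by simp [h] at hpp1
  have hdense := measureDense_levAlg par lev hlev hsucc ν hν
  -- Step B : simple functions can be approximated
  have stepB : ∀ g : SimpleFunc (PBoundary par lev) ℝ, MemLp g pp ν → ∀ δ : ℝ≥0∞, δ ≠ 0 →
      ∃ h : PBoundary par lev → ℝ, MemLp h pp ν ∧ eLpNorm (⇑g - h) pp ν < δ ∧
        ∃ k0 : ℤ, LevelConst par lev h k0 := by
    apply SimpleFunc.induction
    · -- indicator case
      intro c s hs hmem δ hδ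
      simp only [SimpleFunc.coe_piecewise, SimpleFunc.coe_const, SimpleFunc.coe_zero,
        Function.const_zero, Set.piecewise_eq_indicator] at hmem ⊢
      simp only [← Function.const_def] at hmem ⊢
      by_cases hc : c = 0
      · refine ⟨0, MemLp.zero, ?_, 0, fun x _ => ⟨0, fun ω _ => rfl⟩⟩
        have : (s.indicator (fun _ => c) - (0 : PBoundary par lev → ℝ)) = 0 := by
          ext ω; simp [hc]
        rw [this, eLpNorm_zero]
        exact hδ.bot_lt
      · -- c ≠ 0 : the set has finite measure
        have hsfin : ν s ≠ ⊤ := by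
          by_contra htop
          have := hmem.eLpNorm_lt_top
          rw [eLpNorm_indicator_const hs hpp0 hpptop, htop,
            ENNReal.top_rpow_of_pos (one_div_pos.2 (ENNReal.toReal_pos hpp0 hpptop)),
            ENNReal.mul_top (by simpa using hc)] at this
          exact (lt_irrefl _ this).elim
        -- choose the target radius
        obtain ⟨r, hr0, hrδ⟩ : ∃ r : ℝ≥0∞, 0 < r ∧ r ≠ ⊤ ∧ (‖c‖₊ : ℝ≥0∞) * r < δ := by
          rcases eq_or_ne δ ⊤ with rfl | hδtop
          · exact ⟨1, one_pos, ENNReal.one_ne_top, by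
              simp [ENNReal.mul_lt_top, ENNReal.coe_lt_top, lt_top_iff_ne_top]⟩
          · refine ⟨δ / 2 / ‖c‖₊, ?_, ?_, ?_⟩
            · exact ENNReal.div_pos (by simp [ENNReal.div_eq_zero_iff, hδ, hδtop])
                (by simp)
            · exact (ENNReal.div_lt_top ((ENNReal.div_lt_top hδtop (by norm_num)).ne)
                (by simpa using hc)).ne
            · rw [ENNReal.mul_div_cancel (by simpa using hc) (by simp)]
              exact ENNReal.half_lt_self hδ hδtop
        obtain ⟨hrtop, hrδ⟩ := hrδ
        set εr : ℝ := (r ^ pp.toReal).toReal with hεr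
        have hεrpos : 0 < εr := by
          rw [hεr]
          apply ENNReal.toReal_pos
          · exact (ENNReal.rpow_pos hr0 hrtop).ne'
          · exact (ENNReal.rpow_lt_top_of_nonneg ENNReal.toReal_nonneg hrtop).ne
        obtain ⟨t, htmem, htfin, hst⟩ := hdense.fin_meas_approx hs hsfin εr hεrpos
        rw [ENNReal.ofReal_toReal
          (ENNReal.rpow_lt_top_of_nonneg ENNReal.toReal_nonneg hrtop).ne] at hst
        have htmeas : MeasurableSet t := htmem.1
        refine ⟨t.indicator (fun _ => c),
          memLp_indicator_const pp htmeas c (Or.inr htfin), ?_, ?_⟩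
        · -- eLpNorm estimate
          have hmono : ∀ ω, ‖((s.indicator (fun _ => c) : PBoundary par lev → ℝ)
              - t.indicator (fun _ => c)) ω‖
              ≤ ‖(symmDiff s t).indicator (fun _ => c) ω‖ := by
            intro ω
            by_cases hωs : ω ∈ s <;> by_cases hωt : ω ∈ t <;>
              simp [Set.indicator_apply, hωs, hωt, Set.mem_symmDiff]
          refine lt_of_le_of_lt (eLpNorm_mono hmono) ?_
          rw [eLpNorm_indicator_const (hs.symmDiff htmeas) hpp0 hpptop]
          refine lt_of_le_of_lt ?_ hrδ
          refine mul_le_mul_right ?_ _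
          have := ENNReal.rpow_le_rpow hst.le (by positivity : (0:ℝ) ≤ 1 / pp.toReal)
          rw [← ENNReal.rpow_mul, mul_one_div, div_self
            (ENNReal.toReal_pos hpp0 hpptop).ne', ENNReal.rpow_one] at this
          exact this
        · -- LevelConst
          obtain ⟨k0, hk0⟩ := htmem.2
          refine ⟨k0, fun x hx => ?_⟩
          rcases hk0 x hx with hsub | hdisj
          · exact ⟨c, fun ω hω => Set.indicator_of_mem (hsub hω) _⟩
          · exact ⟨0, fun ω hω => Set.indicator_of_notMem
              (fun hmem' => Set.disjoint_left.1 hdisj hω hmem') _⟩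
    · -- additive case
      intro g1 g2 hdisj ih1 ih2 hmem δ hδ
      simp only [SimpleFunc.coe_add] at hmem ⊢
      have hm1 : MemLp g1 pp ν := by
        refine hmem.mono g1.aestronglyMeasurable (Filter.Eventually.of_forall fun ω => ?_)
        by_cases h1 : g1 ω = 0
        · simp [h1]
        · have h2 : g2 ω = 0 := by
            by_contra h2
            exact (Set.disjoint_left.1 hdisj (by simpa using h1)) (by simpa using h2)
          simp [Pi.add_apply, h2]
      have hm2 : MemLp g2 pp ν := by
        refine hmem.mono g2.aestronglyMeasurable (Filter.Eventually.of_forall fun ω => ?_)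
        by_cases h2 : g2 ω = 0
        · simp [h2]
        · have h1 : g1 ω = 0 := by
            by_contra h1
            exact (Set.disjoint_left.1 hdisj (by simpa using h1)) (by simpa using h2)
          simp [Pi.add_apply, h1]
      have hδ2 : δ / 2 ≠ 0 := by simp [ENNReal.div_eq_zero_iff, hδ]
      obtain ⟨h1, hm1', he1, k1, hk1⟩ := ih1 hm1 (δ/2) hδ2
      obtain ⟨h2, hm2', he2, k2, hk2⟩ := ih2 hm2 (δ/2) hδ2
      refine ⟨h1 + h2, hm1'.add hm2', ?_, min k1 k2, levelConst_add par lev hk1 hk2⟩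
      have heq : (⇑g1 + ⇑g2) - (h1 + h2) = (⇑g1 - h1) + (⇑g2 - h2) := by
        ext ω; simp; ring
      rw [heq]
      calc eLpNorm ((⇑g1 - h1) + (⇑g2 - h2)) pp ν
          ≤ eLpNorm (⇑g1 - h1) pp ν + eLpNorm (⇑g2 - h2) pp ν :=
            eLpNorm_add_le (hm1.sub hm1').aestronglyMeasurable
              (hm2.sub hm2').aestronglyMeasurable hpp1
        _ < δ/2 + δ/2 := ENNReal.add_lt_add he1 he2
        _ = δ := ENNReal.add_halves δ
  -- Step A + C
  have hε2 : ε / 2 ≠ 0 := by simp [ENNReal.div_eq_zero_iff, hε]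
  obtain ⟨g, hg, hgmem⟩ := hf.exists_simpleFunc_eLpNorm_sub_lt hpptop hε2
  obtain ⟨h, hmemh, hgh, k0, hk0⟩ := stepB g hgmem (ε/2) hε2
  refine ⟨h, hmemh, ?_, k0, hk0⟩
  have heq : f - h = (f - ⇑g) + (⇑g - h) := by ext ω; simp
  rw [heq]
  calc eLpNorm ((f - ⇑g) + (⇑g - h)) pp ν
      ≤ eLpNorm (f - ⇑g) pp ν + eLpNorm (⇑g - h) pp ν :=
        eLpNorm_add_le (hf.sub hgmem).aestronglyMeasurable
          (hgmem.sub hmemh).aestronglyMeasurable hpp1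
    _ < ε/2 + ε/2 := ENNReal.add_lt_add hg hgh
    _ = ε := ENNReal.add_halves ε

end approx

section final
variable {T : Type*} (par : T → T) (lev : T → ℤ)

lemma poisson_pointwise {ν : Measure (PBoundary par lev)}
    (hν : ∀ x : T, 0 < ν (sector par lev x) ∧ ν (sector par lev x) < ⊤)
    {pp : ℝ≥0∞} (hpp1 : 1 ≤ pp)
    {f h : PBoundary par lev → ℝ} (hf : MemLp f pp ν) (hh : MemLp h pp ν) (x : T) :
    poisson par lev ν h x
      = poisson par lev ν f x + poisson par lev ν (fun ω => h ω - f ω) x := by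
  haveI : IsFiniteMeasure (ν.restrict (sector par lev x)) :=
    ⟨by rw [Measure.restrict_apply_univ]; exact (hν x).2⟩
  have hif : Integrable f (ν.restrict (sector par lev x)) :=
    (hf.restrict _).integrable hpp1
  have hih : Integrable h (ν.restrict (sector par lev x)) :=
    (hh.restrict _).integrable hpp1
  unfold poisson mnu
  rw [integral_sub hih hif]
  ring

lemma term_eq_of_levelConst [Countable T] {ν : Measure (PBoundary par lev)}
    (hν : ∀ x : T, 0 < ν (sector par lev x) ∧ ν (sector par lev x) < ⊤)
    {p : ℝ} (hp : 1 < p) {h : PBoundary par lev → ℝ} {k0 : ℤ}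
    (hlc : LevelConst par lev h k0) {k : ℤ} (hk : k ≤ k0) :
    ∑' x : {x : T // lev x = k},
        ENNReal.ofReal (|poisson par lev ν h x.1| ^ p) * ν (sector par lev x.1)
      = ∫⁻ ω, ENNReal.ofReal (|h ω| ^ p) ∂ν := by
  rw [lintegral_partition par lev ν k]
  refine tsum_congr fun x => ?_
  obtain ⟨c, hc⟩ := hlc x.1 (by rw [x.2]; exact hk)
  have hne : (ν (sector par lev x.1)).toReal ≠ 0 :=
    (ENNReal.toReal_pos (hν x.1).1.ne' (hν x.1).2.ne).ne'
  have hpois : poisson par lev ν h x.1 = c := by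
    unfold poisson mnu
    rw [setIntegral_congr_fun (measurableSet_sector par lev x.1)
        (fun ω hω => hc ω hω), setIntegral_const, measureReal_def, smul_eq_mul,
      ← mul_assoc, inv_mul_cancel₀ hne, one_mul]
  have hlint : ∫⁻ ω in sector par lev x.1, ENNReal.ofReal (|h ω| ^ p) ∂ν
      = ENNReal.ofReal (|c| ^ p) * ν (sector par lev x.1) := by
    rw [setLIntegral_congr_fun (measurableSet_sector par lev x.1)
        (fun ω hω => by rw [hc ω hω]),
      setLIntegral_const]
  rw [hpois, hlint]

end final

/-- For every `p ∈ (1,∞)` and `f ∈ L^p(∂T,ν)`,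
`‖f‖_{L^p(ν)}^p ≤ ‖𝒫f‖_{H^p}^p`, and indeed `‖𝒫f‖_{H^p}^p = ‖f‖_{L^p(ν)}^p`. -/
theorem stmt12 {T : Type*} [Nonempty T] (par : T → T) (lev : T → ℤ)
    (hlev : ∀ x : T, lev (par x) = lev x + 1)
    (hfin : ∀ x : T, {y : T | par y = x}.Finite)
    (hsucc : ∀ x : T, ∃ y : T, par y = x)
    (hconn : ∀ x y : T, ∃ n m : ℕ, par^[n] x = par^[m] y)
    (ν : Measure (PBoundary par lev))
    (hν : ∀ x : T, 0 < ν (sector par lev x) ∧ ν (sector par lev x) < ⊤)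
    (p : ℝ) (hp : 1 < p)
    (f : PBoundary par lev → ℝ) (hf : MemLp f (ENNReal.ofReal p) ν) :
    (∫⁻ ω, ENNReal.ofReal (|f ω| ^ p) ∂ν)
        ≤ (⨆ k : ℤ, ∑' x : {x : T // lev x = k},
            ENNReal.ofReal (|poisson par lev ν f x.1| ^ p) * ν (sector par lev x.1)) ∧
      (⨆ k : ℤ, ∑' x : {x : T // lev x = k},
          ENNReal.ofReal (|poisson par lev ν f x.1| ^ p) * ν (sector par lev x.1))
        = ∫⁻ ω, ENNReal.ofReal (|f ω| ^ p) ∂ν := by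
  haveI : Countable T := countable_T par hfin hconn
  have hp0 : (0:ℝ) < p := lt_trans one_pos hp
  have hpp1 : (1:ℝ≥0∞) ≤ ENNReal.ofReal p := ENNReal.one_le_ofReal.2 hp.le
  have hpptop : ENNReal.ofReal p ≠ ⊤ := ENNReal.ofReal_ne_top
  set L : ℝ≥0∞ := ∫⁻ ω, ENNReal.ofReal (|f ω| ^ p) ∂ν with hL
  set S : ℝ≥0∞ := ⨆ k : ℤ, ∑' x : {x : T // lev x = k},
      ENNReal.ofReal (|poisson par lev ν f x.1| ^ p) * ν (sector par lev x.1) with hS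
  have hSL : S ≤ L :=
    iSup_le fun k => term_le_lintegral par lev hν hp
      hf.aestronglyMeasurable.aemeasurable k
  have hroot : L ^ (1/p) ≤ S ^ (1/p) := by
    apply ENNReal.le_of_forall_pos_le_add
    intro η hη _
    have hε2 : ((η : ℝ≥0∞)/2) ≠ 0 := by
      simp [ENNReal.div_eq_zero_iff, hη.ne']
    obtain ⟨h, hmemh, hfh, k0, hk0⟩ := exists_levelConst_approx par lev hlev hsucc hν
      hpp1 hpptop hf hε2
    have hhf_mem : MemLp (fun ω => h ω - f ω) (ENNReal.ofReal p) ν := hmemh.sub hf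
    -- eLpNorm identifications
    have hLf : eLpNorm f (ENNReal.ofReal p) ν = L ^ (1/p) := eLpNorm_ofReal_abs par lev hp f
    have hLh : eLpNorm h (ENNReal.ofReal p) ν
        = (∫⁻ ω, ENNReal.ofReal (|h ω| ^ p) ∂ν) ^ (1/p) := eLpNorm_ofReal_abs par lev hp h
    -- step 1 : triangle for f = h + (f - h)
    have step1 : L ^ (1/p) ≤ eLpNorm h (ENNReal.ofReal p) ν + (η : ℝ≥0∞)/2 := by
      rw [← hLf]
      have : f = h + (f - h) := by ext ω; simp
      calc eLpNorm f (ENNReal.ofReal p) ν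
          = eLpNorm (h + (f - h)) (ENNReal.ofReal p) ν := by rw [← this]
        _ ≤ eLpNorm h (ENNReal.ofReal p) ν + eLpNorm (f - h) (ENNReal.ofReal p) ν :=
            eLpNorm_add_le hmemh.aestronglyMeasurable
              (hf.sub hmemh).aestronglyMeasurable hpp1
        _ ≤ eLpNorm h (ENNReal.ofReal p) ν + (η : ℝ≥0∞)/2 :=
            add_le_add_right hfh.le _
    -- step 2 : eLpNorm h = level-k0 term of h, then Minkowski against f
    have step2 : eLpNorm h (ENNReal.ofReal p) ν
        ≤ S ^ (1/p) + (η : ℝ≥0∞)/2 := by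
      rw [hLh, ← term_eq_of_levelConst par lev hν hp hk0 (le_refl k0)]
      have hptw : ∀ x : {x : T // lev x = k0},
          poisson par lev ν h x.1
            = poisson par lev ν f x.1 + poisson par lev ν (fun ω => h ω - f ω) x.1 :=
        fun x => poisson_pointwise par lev hν hpp1 hf hmemh x.1
      have hmink :
          (∑' x : {x : T // lev x = k0},
            ENNReal.ofReal (|poisson par lev ν h x.1| ^ p) * ν (sector par lev x.1)) ^ (1/p)
          ≤ (∑' x : {x : T // lev x = k0},
              ENNReal.ofReal (|poisson par lev ν f x.1| ^ p) * ν (sector par lev x.1)) ^ (1/p)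
            + (∑' x : {x : T // lev x = k0},
              ENNReal.ofReal (|poisson par lev ν (fun ω => h ω - f ω) x.1| ^ p)
                * ν (sector par lev x.1)) ^ (1/p) := by
        have := tsum_Lp_add (p := p) hp.le
          (fun x : {x : T // lev x = k0} => ν (sector par lev x.1))
          (fun x => poisson par lev ν f x.1)
          (fun x => poisson par lev ν (fun ω => h ω - f ω) x.1)
        refine le_trans (le_of_eq ?_) this
        congr 1
        exact tsum_congr fun x => by rw [hptw x]
      refine le_trans hmink (add_le_add ?_ ?_)
      · exact ENNReal.rpow_le_rpow (le_iSup (fun k : ℤ => ∑' x : {x : T // lev x = k},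
          ENNReal.ofReal (|poisson par lev ν f x.1| ^ p) * ν (sector par lev x.1)) k0)
          (by positivity)
      · have hterm := term_le_lintegral par lev hν hp
          hhf_mem.aestronglyMeasurable.aemeasurable k0
        have : (∫⁻ ω, ENNReal.ofReal (|h ω - f ω| ^ p) ∂ν) ^ (1/p)
            = eLpNorm (fun ω => h ω - f ω) (ENNReal.ofReal p) ν :=
          (eLpNorm_ofReal_abs par lev hp _).symm
        refine le_trans (ENNReal.rpow_le_rpow hterm (by positivity)) ?_
        rw [this]
        have : eLpNorm (fun ω => h ω - f ω) (ENNReal.ofReal p) ν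
            = eLpNorm (f - h) (ENNReal.ofReal p) ν := by
          rw [show (fun ω => h ω - f ω) = h - f from rfl, eLpNorm_sub_comm]
        rw [this]
        exact hfh.le
    calc L ^ (1/p) ≤ eLpNorm h (ENNReal.ofReal p) ν + (η : ℝ≥0∞)/2 := step1
      _ ≤ S ^ (1/p) + (η : ℝ≥0∞)/2 + (η : ℝ≥0∞)/2 := add_le_add_left step2 _
      _ = S ^ (1/p) + η := by rw [add_assoc, ENNReal.add_halves]
  have hLS : L ≤ S := by
    have h1 : (L ^ (1/p)) ^ p ≤ (S ^ (1/p)) ^ p := ENNReal.rpow_le_rpow hroot hp0.le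
    have h2 : ∀ x : ℝ≥0∞, (x ^ (1/p)) ^ p = x := fun x => by
      rw [← ENNReal.rpow_mul, one_div, inv_mul_cancel₀ hp0.ne', ENNReal.rpow_one]
    rwa [h2, h2] at h1
  exact ⟨hLS, le_antisymm hSL hLS⟩
end

section
/- Let p ∈ (1, ∞), σ : T → [0,∞), and C > 0, and suppose that Σ_{x ∈ T} |𝒫f(x)|^p σ(x) ≤ C^p ‖𝒫f‖_{H^p}^p for every f ∈ L^p(∂T, ν). Then σ is a Carleson measure: Σ_{y ∈ T_v} σ(y) ≤ C^p ν(∂T_v) for every v ∈ T. -/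
open MeasureTheory
open scoped ENNReal NNReal

/-- If `Σ_{x ∈ T} |𝒫f(x)|^p σ(x) ≤ C^p ‖𝒫f‖_{H^p}^p` for every
`f ∈ L^p(∂T,ν)`, then `σ` is a Carleson measure with constant `C^p`. -/
theorem stmt14 {T : Type*} [Nonempty T] (par : T → T) (lev : T → ℤ)
    (hlev : ∀ x : T, lev (par x) = lev x + 1)
    (hfin : ∀ x : T, {y : T | par y = x}.Finite)
    (hsucc : ∀ x : T, ∃ y : T, par y = x)
    (hconn : ∀ x y : T, ∃ n m : ℕ, par^[n] x = par^[m] y)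
    (ν : Measure (PBoundary par lev))
    (hν : ∀ x : T, 0 < ν (sector par lev x) ∧ ν (sector par lev x) < ⊤)
    (p : ℝ) (hp : 1 < p) (σ : T → ℝ≥0) (C : ℝ) (hC : 0 < C)
    (h : ∀ f : PBoundary par lev → ℝ, MemLp f (ENNReal.ofReal p) ν →
      ∑' x : T, ENNReal.ofReal (|poisson par lev ν f x| ^ p) * (σ x : ℝ≥0∞)
        ≤ ENNReal.ofReal (C ^ p) *
            ⨆ k : ℤ, ∑' x : {x : T // lev x = k},
              ENNReal.ofReal (|poisson par lev ν f x.1| ^ p) * ν (sector par lev x.1)) :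
    ∀ v : T, ∑' y : tsector par v, (σ y.1 : ℝ≥0∞)
      ≤ ENNReal.ofReal (C ^ p) * ν (sector par lev v) := by
  intro v
  have hmeas : ∀ x : T, MeasurableSet (sector par lev x) := fun x =>
    MeasurableSpace.measurableSet_generateFrom (Set.mem_range_self x)
  set f : PBoundary par lev → ℝ := (sector par lev v).indicator (fun _ => (1:ℝ)) with hfdef
  have hf : MemLp f (ENNReal.ofReal p) ν :=
    memLp_indicator_const _ (hmeas v) 1 (Or.inr (hν v).2.ne)
  have hlevIter : ∀ (n : ℕ) (x : T), lev (par^[n] x) = lev x + n := by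
    intro n
    induction n with
    | zero => intro x; simp
    | succ n ih =>
      intro x
      rw [Function.iterate_succ_apply', hlev, ih]
      push_cast; ring
  have homega : ∀ (ω : PBoundary par lev) (n : ℕ) (j : ℤ),
      ω.1 (j + n) = par^[n] (ω.1 j) := by
    intro ω n
    induction n with
    | zero => intro j; simp
    | succ n ih =>
      intro j
      rw [Function.iterate_succ_apply', ← ih, ω.2.2]
      congr 1; push_cast; ring
  have hsub : ∀ x ∈ tsector par v, sector par lev x ⊆ sector par lev v := by
    rintro x ⟨n, rfl⟩ ω hω
    have h1 : ω.1 (lev x + n) = par^[n] x := by rw [homega, hω]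
    show ω.1 (lev (par^[n] x)) = par^[n] x
    rwa [hlevIter n x]
  have hint : ∀ x : T, ∫ ω in sector par lev x, f ω ∂ν
      = (ν (sector par lev x ∩ sector par lev v)).toReal := by
    intro x
    rw [hfdef, setIntegral_indicator (hmeas v)]
    simp [Measure.real]
  have hm_pos : ∀ x, 0 < mnu par lev ν x := fun x =>
    ENNReal.toReal_pos (hν x).1.ne' (hν x).2.ne
  have hP : ∀ x : T, poisson par lev ν f x
      = (mnu par lev ν x)⁻¹ * (ν (sector par lev x ∩ sector par lev v)).toReal := by
    intro x; rw [poisson, hint]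
  have hP_nonneg : ∀ x, 0 ≤ poisson par lev ν f x := fun x => by
    rw [hP]
    exact mul_nonneg (inv_nonneg.mpr (hm_pos x).le) ENNReal.toReal_nonneg
  have hP_le_one : ∀ x, poisson par lev ν f x ≤ 1 := by
    intro x
    rw [hP]
    have h1 : (ν (sector par lev x ∩ sector par lev v)).toReal ≤ mnu par lev ν x :=
      ENNReal.toReal_mono (hν x).2.ne (measure_mono Set.inter_subset_left)
    calc (mnu par lev ν x)⁻¹ * (ν (sector par lev x ∩ sector par lev v)).toReal
        ≤ (mnu par lev ν x)⁻¹ * mnu par lev ν x := by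
          exact mul_le_mul_of_nonneg_left h1 (inv_nonneg.mpr (hm_pos x).le)
      _ = 1 := inv_mul_cancel₀ (hm_pos x).ne'
  have hPone : ∀ x ∈ tsector par v, poisson par lev ν f x = 1 := by
    intro x hx
    rw [hP, Set.inter_eq_left.mpr (hsub x hx)]
    exact inv_mul_cancel₀ (hm_pos x).ne'
  -- lower bound
  have hlower : ∑' y : tsector par v, (σ y.1 : ℝ≥0∞)
      ≤ ∑' x : T, ENNReal.ofReal (|poisson par lev ν f x| ^ p) * (σ x : ℝ≥0∞) := by
    have heq : ∑' y : tsector par v, (σ y.1 : ℝ≥0∞)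
        = ∑' y : tsector par v,
            ENNReal.ofReal (|poisson par lev ν f y.1| ^ p) * (σ y.1 : ℝ≥0∞) := by
      apply tsum_congr
      rintro ⟨y, hy⟩
      rw [hPone y hy]
      simp
    rw [heq]
    exact ENNReal.tsum_comp_le_tsum_of_injective Subtype.val_injective
      (fun x => ENNReal.ofReal (|poisson par lev ν f x| ^ p) * (σ x : ℝ≥0∞))
  -- upper bound on each term of H^p norm
  have hterm : ∀ x : T, ENNReal.ofReal (|poisson par lev ν f x| ^ p) * ν (sector par lev x)
      ≤ ν (sector par lev x ∩ sector par lev v) := by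
    intro x
    have habs : |poisson par lev ν f x| = poisson par lev ν f x := abs_of_nonneg (hP_nonneg x)
    have hpow : |poisson par lev ν f x| ^ p ≤ poisson par lev ν f x := by
      rw [habs]
      rcases eq_or_lt_of_le (hP_nonneg x) with h0 | h0
      · rw [← h0, Real.zero_rpow (by linarith : p ≠ 0)]
      · calc poisson par lev ν f x ^ p ≤ poisson par lev ν f x ^ (1:ℝ) :=
            Real.rpow_le_rpow_of_exponent_ge h0 (hP_le_one x) hp.le
          _ = poisson par lev ν f x := Real.rpow_one _
    calc ENNReal.ofReal (|poisson par lev ν f x| ^ p) * ν (sector par lev x)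
        ≤ ENNReal.ofReal (poisson par lev ν f x) * ν (sector par lev x) := by
          exact mul_le_mul_left (ENNReal.ofReal_le_ofReal hpow) _
      _ = ν (sector par lev x ∩ sector par lev v) := by
          rw [hP, ENNReal.ofReal_mul (inv_nonneg.mpr (hm_pos x).le),
            ENNReal.ofReal_toReal ((lt_of_le_of_lt (measure_mono Set.inter_subset_left)
              (hν x).2).ne)]
          rw [mnu, ← ENNReal.toReal_inv,
            ENNReal.ofReal_toReal (ENNReal.inv_ne_top.mpr (hν x).1.ne')]
          rw [mul_comm ((ν (sector par lev x))⁻¹), mul_assoc,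
            ENNReal.inv_mul_cancel (hν x).1.ne' (hν x).2.ne, mul_one]
  -- disjointness at fixed level
  have hdisj : ∀ k : ℤ, ∀ x y : {x : T // lev x = k}, x ≠ y →
      Disjoint (sector par lev x.1 ∩ sector par lev v) (sector par lev y.1 ∩ sector par lev v) := by
    rintro k ⟨x, hx⟩ ⟨y, hy⟩ hxy
    apply Set.disjoint_left.mpr
    rintro ω ⟨hω1, -⟩ ⟨hω2, -⟩
    apply hxy
    have : x = y := by
      have e1 : ω.1 k = x := by rw [← hx]; exact hω1
      have e2 : ω.1 k = y := by rw [← hy]; exact hω2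
      rw [← e1, e2]
    exact Subtype.ext this
  have hupper : (⨆ k : ℤ, ∑' x : {x : T // lev x = k},
      ENNReal.ofReal (|poisson par lev ν f x.1| ^ p) * ν (sector par lev x.1))
      ≤ ν (sector par lev v) := by
    apply iSup_le
    intro k
    calc ∑' x : {x : T // lev x = k},
          ENNReal.ofReal (|poisson par lev ν f x.1| ^ p) * ν (sector par lev x.1)
        ≤ ∑' x : {x : T // lev x = k}, ν (sector par lev x.1 ∩ sector par lev v) :=
          ENNReal.tsum_le_tsum fun x => hterm x.1
      _ ≤ ν (sector par lev v) := by
          apply Summable.tsum_le_of_sum_le ENNReal.summable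
          intro s
          rw [← measure_biUnion_finset (fun x _ y _ hxy => hdisj k x y hxy)
            (fun x _ => (hmeas x.1).inter (hmeas v))]
          exact measure_mono (Set.iUnion₂_subset fun x _ => Set.inter_subset_right)
  calc ∑' y : tsector par v, (σ y.1 : ℝ≥0∞)
      ≤ ∑' x : T, ENNReal.ofReal (|poisson par lev ν f x| ^ p) * (σ x : ℝ≥0∞) := hlower
    _ ≤ ENNReal.ofReal (C ^ p) * ⨆ k : ℤ, ∑' x : {x : T // lev x = k},
          ENNReal.ofReal (|poisson par lev ν f x.1| ^ p) * ν (sector par lev x.1) := h f hf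
    _ ≤ ENNReal.ofReal (C ^ p) * ν (sector par lev v) := mul_le_mul_right hupper _
end
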